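/- arXiv:2409.03158 — 2 statements merged into one kernel-verified Lean document; each statement's English description precedes it below -/
import Mathlib

section
/- Let a > b > 0 and 0 < β < a with β ≠ b, and let n = 2m be an even integer with m ≥ 2. Then the (m−1)×(m−1) Hankel determinant det(B_{i+j+3})_{0 ≤ i,j ≤ m−2} vanishes, where B_k are the Taylor coefficients at 0 of √((a−x)(b−x)(β−x)), if and only if there exist real polynomials p and q with deg p = m and deg q = m−2 satisfying p(s)² − s(s − 1/a)(s − 1/b)(s − 1/β) q(s)² = 1 in ℝ[s]. (Both conditions characterize the n-periodicity, for even n, of magic billiard trajectories in the ellipse with caustic parameter β: Corollaries 3.1 and 3.2(a).) -/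
open Polynomial

namespace Stmt9
open Finset

lemma reflect_reflect' {R : Type*} [Semiring R] (N : ℕ) (f : R[X]) :
    reflect N (reflect N f) = f := by ext i; simp

lemma reflect_sub' {R : Type*} [Ring R] (N : ℕ) (f g : R[X]) :
    reflect N (f - g) = reflect N f - reflect N g := by ext i; simp [coeff_reflect]

lemma natDegree_reflect_le' {R : Type*} [Semiring R] {N : ℕ} {f : R[X]} (h : f.natDegree ≤ N) :
    (reflect N f).natDegree ≤ N := by
  rw [natDegree_le_iff_coeff_eq_zero]
  intro k hk
  rw [coeff_reflect, revAt_eq_self_of_lt hk]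
  exact coeff_eq_zero_of_natDegree_lt (lt_of_le_of_lt h hk)

lemma parity {U : ℝ[X]} (hU : U.natDegree = 3) {P Q : ℝ[X]} (hQ : Q ≠ 0)
    (h : P ^ 2 = U * Q ^ 2) : False := by
  have hUne : U ≠ 0 := fun h0 => by simp [h0] at hU
  have hQ2 : Q ^ 2 ≠ 0 := pow_ne_zero _ hQ
  have h1 : (P ^ 2).natDegree = (U * Q ^ 2).natDegree := by rw [h]
  rw [natDegree_mul hUne hQ2, natDegree_pow, natDegree_pow, hU] at h1
  omega

lemma coeff_sq_top (P : ℝ[X]) (d : ℕ) (h : P.natDegree ≤ d) :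
    (P ^ 2).coeff (2 * d) = (P.coeff d) ^ 2 := by
  rw [pow_two, coeff_mul]
  rw [Finset.sum_eq_single (d, d)]
  · rw [pow_two]
  · rintro ⟨x, y⟩ hmem hne
    rw [Finset.HasAntidiagonal.mem_antidiagonal] at hmem
    have : d < x ∨ d < y := by
      by_contra hc
      push_neg at hc
      exact hne (by ext <;> omega)
    rcases this with h1 | h1
    · rw [coeff_eq_zero_of_natDegree_lt (lt_of_le_of_lt h h1), zero_mul]
    · rw [coeff_eq_zero_of_natDegree_lt (lt_of_le_of_lt h h1), mul_zero]
  · intro hmem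
    exact absurd (Finset.HasAntidiagonal.mem_antidiagonal.mpr (by omega)) hmem

lemma vanish {U : ℝ[X]} {F : PowerSeries ℝ} (hFU : F ^ 2 = (U : PowerSeries ℝ))
    (Q : ℝ[X]) (s t : ℕ)
    (hker : ∀ k, s ≤ k → k ≤ t → (PowerSeries.coeff k) ((Q : PowerSeries ℝ) * F) = 0)
    {k : ℕ} (hk : k ≤ t) :
    ((PowerSeries.trunc s ((Q : PowerSeries ℝ) * F)) ^ 2 - U * Q ^ 2).coeff k = 0 := by
  set P : ℝ[X] := PowerSeries.trunc s ((Q : PowerSeries ℝ) * F) with hP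
  have hu : ∀ j, j ≤ t →
      PowerSeries.coeff j ((P : PowerSeries ℝ) - (Q : PowerSeries ℝ) * F) = 0 := by
    intro j hj
    rw [map_sub, Polynomial.coeff_coe, hP, PowerSeries.coeff_trunc]
    by_cases hs : j < s
    · rw [if_pos hs, sub_self]
    · rw [if_neg hs, hker j (not_lt.mp hs) hj, sub_zero]
  have key : ((P ^ 2 - U * Q ^ 2 : ℝ[X]) : PowerSeries ℝ)
      = ((P : PowerSeries ℝ) - Q * F) * ((P : PowerSeries ℝ) + Q * F) := by
    have h2 : ((P : PowerSeries ℝ) - Q * F) * ((P : PowerSeries ℝ) + Q * F)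
        = (P : PowerSeries ℝ) ^ 2 - (Q : PowerSeries ℝ) ^ 2 * F ^ 2 := by ring
    rw [h2, hFU]
    push_cast
    ring
  rw [← Polynomial.coeff_coe, key, PowerSeries.coeff_mul]
  refine Finset.sum_eq_zero ?_
  rintro ⟨x, y⟩ hmem
  rw [Finset.HasAntidiagonal.mem_antidiagonal] at hmem
  rw [hu x (by omega), zero_mul]

lemma coeff_mulF (B : ℕ → ℝ) (μ : ℕ) (Q : ℝ[X]) (hQd : Q.natDegree ≤ μ) (i : ℕ) :
    PowerSeries.coeff (μ + 3 + i) ((Q : PowerSeries ℝ) * PowerSeries.mk B)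
      = ∑ j : Fin (μ + 1), Q.coeff (μ - (j : ℕ)) * B (i + (j : ℕ) + 3) := by
  rw [PowerSeries.coeff_mul, Finset.Nat.sum_antidiagonal_eq_sum_range_succ_mk]
  have hsub : Finset.range (μ + 1) ⊆ Finset.range (μ + 3 + i + 1) := by
    apply Finset.range_subset_range.mpr; omega
  rw [← Finset.sum_subset hsub (fun x _ hx => by
    rw [Polynomial.coeff_coe,
      coeff_eq_zero_of_natDegree_lt (lt_of_le_of_lt hQd (by simpa using hx)), zero_mul])]
  rw [← Finset.sum_range_reflect]
  rw [Fin.sum_univ_eq_sum_range (fun j => Q.coeff (μ - j) * B (i + j + 3))]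
  refine Finset.sum_congr rfl fun j hj => ?_
  rw [Finset.mem_range] at hj
  rw [Polynomial.coeff_coe, PowerSeries.coeff_mk]
  have h1 : μ + 1 - 1 - j = μ - j := by omega
  rw [h1]
  congr 2
  omega

/-- The kernel polynomial has nonzero constant coefficient. -/
lemma Q0_ne_zero {U : ℝ[X]} {B : ℕ → ℝ} (hFU : (PowerSeries.mk B) ^ 2 = (U : PowerSeries ℝ))
    (hU3 : U.natDegree = 3) {μ : ℕ} {Q : ℝ[X]} (hQne : Q ≠ 0) (hQdeg : Q.natDegree ≤ μ)
    (hker : ∀ k, μ + 3 ≤ k → k ≤ 2 * μ + 3 →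
      (PowerSeries.coeff k) ((Q : PowerSeries ℝ) * PowerSeries.mk B) = 0) :
    Q.coeff 0 ≠ 0 := by
  set F := PowerSeries.mk B with hFdef
  intro h0
  rcases Nat.eq_zero_or_pos μ with hμ | hμ
  · subst hμ
    exact hQne (by rw [eq_C_of_natDegree_le_zero (by omega : Q.natDegree ≤ 0), h0, map_zero])
  obtain ⟨μ₁, rfl⟩ : ∃ t, μ = t + 1 := ⟨μ - 1, by omega⟩
  obtain ⟨Q₁, rfl⟩ : X ∣ Q := X_dvd_iff.mpr h0
  have hQ₁ne : Q₁ ≠ 0 := fun h => hQne (by rw [h, mul_zero])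
  have hQ₁deg : Q₁.natDegree ≤ μ₁ := by
    have := natDegree_mul (X_ne_zero (R := ℝ)) hQ₁ne
    rw [natDegree_X] at this
    omega
  have hker₁ : ∀ k, μ₁ + 3 ≤ k → k ≤ 2 * μ₁ + 4 →
      (PowerSeries.coeff k) ((Q₁ : PowerSeries ℝ) * F) = 0 := by
    intro k hk1 hk2
    have hshift : (PowerSeries.coeff (k + 1)) (((X * Q₁ : ℝ[X]) : PowerSeries ℝ) * F)
        = (PowerSeries.coeff k) ((Q₁ : PowerSeries ℝ) * F) := by
      rw [Polynomial.coe_mul, Polynomial.coe_X, mul_assoc, PowerSeries.coeff_succ_X_mul]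
    rw [← hshift]
    exact hker (k + 1) (by omega) (by omega)
  have hvan := fun k hk =>
    vanish hFU Q₁ (μ₁ + 3) (2 * μ₁ + 4) hker₁ (k := k) hk
  set W : ℝ[X] := (PowerSeries.trunc (μ₁ + 3) ((Q₁ : PowerSeries ℝ) * F)) ^ 2 - U * Q₁ ^ 2
    with hWdef
  have hWdeg : W.natDegree ≤ 2 * μ₁ + 4 := by
    apply le_trans (natDegree_sub_le _ _)
    apply max_le
    · apply le_trans (natDegree_pow_le)
      have := PowerSeries.natDegree_trunc_lt ((Q₁ : PowerSeries ℝ) * F) (μ₁ + 2)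
      simp only [show μ₁ + 2 + 1 = μ₁ + 3 from rfl] at this
      omega
    · apply le_trans (natDegree_mul_le)
      have := natDegree_pow_le (p := Q₁) (n := 2)
      omega
  have hW0 : W = 0 := by
    ext k
    rcases le_or_gt k (2 * μ₁ + 4) with hk | hk
    · rw [hvan k hk, coeff_zero]
    · rw [coeff_eq_zero_of_natDegree_lt (lt_of_le_of_lt hWdeg hk), coeff_zero]
  have : (PowerSeries.trunc (μ₁ + 3) ((Q₁ : PowerSeries ℝ) * F)) ^ 2 = U * Q₁ ^ 2 :=
    sub_eq_zero.mp hW0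
  exact parity hU3 hQ₁ne this

lemma forward (B : ℕ → ℝ) (U DD : ℝ[X])
    (hFU : (PowerSeries.mk B) ^ 2 = (U : PowerSeries ℝ))
    (hU3 : U.natDegree = 3) (hB0 : B 0 ≠ 0) (R0 : ℝ) (hR0 : 0 < R0)
    (hDdeg : DD.natDegree ≤ 4) (hUD : reflect 4 DD = C R0⁻¹ * U) (μ : ℕ)
    (hdet : (Matrix.of fun i j : Fin (μ + 1) => B ((i : ℕ) + (j : ℕ) + 3)).det = 0) :
    ∃ p q : ℝ[X], p.degree = ((μ + 2 : ℕ) : WithBot ℕ) ∧ q.degree = ((μ : ℕ) : WithBot ℕ) ∧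
      p ^ 2 - DD * q ^ 2 = 1 := by
  classical
  set F := PowerSeries.mk B with hFdef
  obtain ⟨v, hvne, hv⟩ := (Matrix.exists_mulVec_eq_zero_iff).mpr hdet
  -- the kernel polynomial
  set Q : ℝ[X] := ∑ j : Fin (μ + 1), C (v j.rev) * X ^ (j : ℕ) with hQdef
  have hQcoeff : ∀ i : Fin (μ + 1), Q.coeff (i : ℕ) = v i.rev := by
    intro i
    rw [hQdef, finset_sum_coeff]
    rw [Finset.sum_eq_single i]
    · simp
    · intro j _ hne
      rw [coeff_C_mul, coeff_X_pow, if_neg (by exact fun h => hne (Fin.ext h.symm)), mul_zero]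
    · intro h; exact absurd (Finset.mem_univ i) h
  have hQdeg : Q.natDegree ≤ μ := by
    rw [natDegree_le_iff_coeff_eq_zero]
    intro k hk
    rw [hQdef, finset_sum_coeff]
    refine Finset.sum_eq_zero fun j _ => ?_
    rw [coeff_C_mul, coeff_X_pow, if_neg (by omega), mul_zero]
  have hQne : Q ≠ 0 := by
    obtain ⟨j, hj⟩ := Function.ne_iff.mp hvne
    intro h0
    apply hj
    have := hQcoeff j.rev
    rw [Fin.rev_rev, h0, coeff_zero] at this
    exact this.symm
  have hker : ∀ k, μ + 3 ≤ k → k ≤ 2 * μ + 3 →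
      (PowerSeries.coeff k) ((Q : PowerSeries ℝ) * F) = 0 := by
    intro k hk1 hk2
    have hi : k - (μ + 3) ≤ μ := by omega
    have hkeq : k = μ + 3 + (k - (μ + 3)) := by omega
    rw [hkeq, hFdef, coeff_mulF B μ Q hQdeg]
    have hrow := congrFun hv ⟨k - (μ + 3), by omega⟩
    rw [Matrix.mulVec, dotProduct] at hrow
    rw [Pi.zero_apply] at hrow
    rw [← hrow]
    refine Finset.sum_congr rfl fun j _ => ?_
    have hco : Q.coeff (μ - (j : ℕ)) = v j := by
      have he : μ - (j : ℕ) = ((j.rev : Fin (μ + 1)) : ℕ) := by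
        rw [Fin.val_rev]; omega
      rw [he, hQcoeff j.rev, Fin.rev_rev]
    rw [hco, Matrix.of_apply]
    ring
  have hQ0 : Q.coeff 0 ≠ 0 := Q0_ne_zero hFU hU3 hQne hQdeg hker
  -- truncation
  set P : ℝ[X] := PowerSeries.trunc (μ + 3) ((Q : PowerSeries ℝ) * F) with hPdef
  have hPdeg : P.natDegree ≤ μ + 2 := by
    have := PowerSeries.natDegree_trunc_lt ((Q : PowerSeries ℝ) * F) (μ + 2)
    simp only [show μ + 2 + 1 = μ + 3 from rfl] at this
    rw [hPdef]; omega
  set W : ℝ[X] := P ^ 2 - U * Q ^ 2 with hWdef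
  have hvan : ∀ k ≤ 2 * μ + 3, W.coeff k = 0 := fun k hk =>
    vanish hFU Q (μ + 3) (2 * μ + 3) hker hk
  have hWdeg : W.natDegree ≤ 2 * μ + 4 := by
    rw [hWdef]
    apply le_trans (natDegree_sub_le _ _)
    apply max_le
    · apply le_trans (natDegree_pow_le); omega
    · apply le_trans (natDegree_mul_le)
      have := natDegree_pow_le (p := Q) (n := 2)
      omega
  set c : ℝ := W.coeff (2 * μ + 4) with hcdef
  have hW : W = C c * X ^ (2 * μ + 4) := by
    ext k
    rcases lt_trichotomy k (2 * μ + 4) with hk | hk | hk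
    · rw [hvan k (by omega), coeff_C_mul, coeff_X_pow, if_neg (by omega), mul_zero]
    · rw [hk, coeff_C_mul, coeff_X_pow, if_pos rfl, mul_one]
    · rw [coeff_eq_zero_of_natDegree_lt (lt_of_le_of_lt hWdeg hk), coeff_C_mul,
        coeff_X_pow, if_neg (by omega), mul_zero]
  have hUQtop : (U * Q ^ 2).coeff (2 * μ + 4) = 0 := by
    apply coeff_eq_zero_of_natDegree_lt
    apply lt_of_le_of_lt (natDegree_mul_le)
    have := natDegree_pow_le (p := Q) (n := 2)
    omega
  have hc : c = (P.coeff (μ + 2)) ^ 2 := by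
    rw [hcdef, hWdef, coeff_sub, hUQtop, sub_zero,
      show 2 * μ + 4 = 2 * (μ + 2) from by ring, coeff_sq_top P (μ + 2) hPdeg]
  have hcne : c ≠ 0 := by
    intro h0
    rw [h0, map_zero, zero_mul] at hW
    exact parity hU3 hQne (sub_eq_zero.mp hW)
  have hcpos : 0 < c := by
    rw [hc]
    have : P.coeff (μ + 2) ≠ 0 := fun h => hcne (by rw [hc, h]; ring)
    positivity
  -- scaling
  set σ : ℝ := Real.sqrt c with hσdef
  have hσ2 : σ ^ 2 = c := Real.sq_sqrt hcpos.le
  have hσne : σ ≠ 0 := by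
    intro h; rw [h] at hσ2; rw [← hσ2] at hcne; exact hcne (by ring)
  have hr0ne : R0 ≠ 0 := hR0.ne'
  have hsR0 : Real.sqrt R0 ^ 2 = R0 := Real.sq_sqrt hR0.le
  have hsR0ne : Real.sqrt R0 ≠ 0 := by
    intro h; rw [h] at hsR0; exact hr0ne (by rw [← hsR0]; ring)
  set P' : ℝ[X] := C σ⁻¹ * P with hP'def
  set Q'' : ℝ[X] := C (Real.sqrt R0 / σ) * Q with hQ''def
  have key : P' ^ 2 - C R0⁻¹ * U * Q'' ^ 2 = C c⁻¹ * (P ^ 2 - U * Q ^ 2) := by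
    rw [hP'def, hQ''def]
    have h1 : (C (σ⁻¹ : ℝ)) ^ 2 = C c⁻¹ := by
      rw [← C_pow]; congr 1; rw [← hσ2]; rw [inv_pow]
    have h2 : C (R0⁻¹ : ℝ) * (C (Real.sqrt R0 / σ)) ^ 2 = C c⁻¹ := by
      rw [← C_pow, ← C_mul]; congr 1
      rw [div_pow, hsR0, ← hσ2]
      field_simp
    calc (C σ⁻¹ * P) ^ 2 - C R0⁻¹ * U * (C (Real.sqrt R0 / σ) * Q) ^ 2
        = (C σ⁻¹) ^ 2 * P ^ 2 - (C R0⁻¹ * (C (Real.sqrt R0 / σ)) ^ 2) * (U * Q ^ 2) := by ring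
      _ = C c⁻¹ * (P ^ 2 - U * Q ^ 2) := by rw [h1, h2]; ring
  have hPell' : P' ^ 2 - C R0⁻¹ * U * Q'' ^ 2 = X ^ (2 * μ + 4) := by
    rw [key, ← hWdef, hW, ← mul_assoc, ← C_mul, inv_mul_cancel₀ hcne, C_1, one_mul]
  -- reverse
  have hP'deg : P'.natDegree ≤ μ + 2 := le_trans (natDegree_C_mul_le _ _) hPdeg
  have hQ''deg : Q''.natDegree ≤ μ := le_trans (natDegree_C_mul_le _ _) hQdeg
  refine ⟨reflect (μ + 2) P', reflect μ Q'', ?_, ?_, ?_⟩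
  · apply degree_eq_of_le_of_coeff_ne_zero
    · exact natDegree_le_iff_degree_le.mp (natDegree_reflect_le' hP'deg)
    · rw [coeff_reflect, revAt_le (le_refl _), Nat.sub_self, hP'def, coeff_C_mul, hPdef,
        PowerSeries.coeff_trunc]
      rw [if_pos (by omega)]
      have hQF0 : (PowerSeries.coeff 0) ((Q : PowerSeries ℝ) * F) = Q.coeff 0 * B 0 := by
        rw [PowerSeries.coeff_mul]
        rw [Finset.Nat.antidiagonal_zero, Finset.sum_singleton, Polynomial.coeff_coe,
          hFdef, PowerSeries.coeff_mk]
      rw [hQF0]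
      exact mul_ne_zero (inv_ne_zero hσne) (mul_ne_zero hQ0 hB0)
  · apply degree_eq_of_le_of_coeff_ne_zero
    · exact natDegree_le_iff_degree_le.mp (natDegree_reflect_le' hQ''deg)
    · rw [coeff_reflect, revAt_le (le_refl _), Nat.sub_self, hQ''def, coeff_C_mul]
      exact mul_ne_zero (div_ne_zero hsR0ne hσne) hQ0
  · have hrefl := congrArg (reflect (2 * μ + 4)) hPell'
    rw [reflect_sub'] at hrefl
    have e1 : reflect (2 * μ + 4) (P' ^ 2) = (reflect (μ + 2) P') ^ 2 := by
      rw [pow_two, pow_two, show 2 * μ + 4 = (μ + 2) + (μ + 2) from by ring,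
        reflect_mul _ _ hP'deg hP'deg]
    have hGdeg : (C (R0⁻¹ : ℝ) * U).natDegree ≤ 4 := by
      rw [← hUD]; exact natDegree_reflect_le' hDdeg
    have hQ''sq : (Q'' ^ 2).natDegree ≤ 2 * μ := by
      have := natDegree_pow_le (p := Q'') (n := 2)
      omega
    have e2 : reflect (2 * μ + 4) (C R0⁻¹ * U * Q'' ^ 2)
        = DD * (reflect μ Q'') ^ 2 := by
      rw [show 2 * μ + 4 = 4 + 2 * μ from by ring, reflect_mul _ _ hGdeg hQ''sq]
      congr 1
      · rw [← hUD, reflect_reflect']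
      · rw [pow_two, pow_two, show 2 * μ = μ + μ from by ring,
          reflect_mul _ _ hQ''deg hQ''deg]
    have e3 : reflect (2 * μ + 4) ((X : ℝ[X]) ^ (2 * μ + 4)) = 1 := by
      rw [reflect_monomial, revAt_le (le_refl _), Nat.sub_self, pow_zero]
    rw [e1, e2, e3] at hrefl
    exact hrefl

lemma backward (B : ℕ → ℝ) (U DD : ℝ[X])
    (hFU : (PowerSeries.mk B) ^ 2 = (U : PowerSeries ℝ))
    (R0 : ℝ) (hR0 : 0 < R0)
    (hDdeg : DD.natDegree ≤ 4) (hUD : reflect 4 DD = C R0⁻¹ * U) (μ : ℕ)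
    (p q : ℝ[X]) (hpdeg : p.degree = ((μ + 2 : ℕ) : WithBot ℕ))
    (hqdeg : q.degree = ((μ : ℕ) : WithBot ℕ)) (hPell : p ^ 2 - DD * q ^ 2 = 1) :
    (Matrix.of fun i j : Fin (μ + 1) => B ((i : ℕ) + (j : ℕ) + 3)).det = 0 := by
  classical
  set F := PowerSeries.mk B with hFdef
  have hpnat : p.natDegree = μ + 2 := natDegree_eq_of_degree_eq_some hpdeg
  have hqnat : q.natDegree = μ := natDegree_eq_of_degree_eq_some hqdeg
  have hpne : p ≠ 0 := by
    intro h; rw [h, degree_zero] at hpdeg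
    exact WithBot.bot_ne_natCast _ hpdeg
  have hqne : q ≠ 0 := by
    intro h; rw [h, degree_zero] at hqdeg
    exact WithBot.bot_ne_natCast _ hqdeg
  set P : ℝ[X] := reflect (μ + 2) p with hPdef
  set Q : ℝ[X] := reflect μ q with hQdef
  have hPdeg : P.natDegree ≤ μ + 2 := natDegree_reflect_le' (le_of_eq hpnat)
  have hQdeg : Q.natDegree ≤ μ := natDegree_reflect_le' (le_of_eq hqnat)
  have hP0 : P.coeff 0 ≠ 0 := by
    rw [hPdef, coeff_reflect, revAt_le (by omega), Nat.sub_zero, ← hpnat]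
    exact leadingCoeff_ne_zero.mpr hpne
  have hQ0 : Q.coeff 0 ≠ 0 := by
    rw [hQdef, coeff_reflect, revAt_le (by omega), Nat.sub_zero, ← hqnat]
    exact leadingCoeff_ne_zero.mpr hqne
  -- reflected Pell equation
  have hP2 : P ^ 2 = X ^ (2 * μ + 4) + C R0⁻¹ * U * Q ^ 2 := by
    have hrefl := congrArg (reflect (2 * μ + 4)) hPell
    rw [reflect_sub'] at hrefl
    have e1 : reflect (2 * μ + 4) (p ^ 2) = P ^ 2 := by
      rw [pow_two, pow_two, show 2 * μ + 4 = (μ + 2) + (μ + 2) from by ring,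
        reflect_mul _ _ (le_of_eq hpnat) (le_of_eq hpnat)]
    have hq2 : (q ^ 2).natDegree ≤ 2 * μ := by
      have := natDegree_pow_le (p := q) (n := 2)
      omega
    have e2 : reflect (2 * μ + 4) (DD * q ^ 2) = C R0⁻¹ * U * Q ^ 2 := by
      rw [show 2 * μ + 4 = 4 + 2 * μ from by ring, reflect_mul _ _ hDdeg hq2, hUD]
      congr 1
      rw [pow_two, pow_two, show 2 * μ = μ + μ from by ring,
        reflect_mul _ _ (le_of_eq hqnat) (le_of_eq hqnat)]
    have e3 : reflect (2 * μ + 4) (1 : ℝ[X]) = X ^ (2 * μ + 4) := by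
      rw [← C_1, reflect_C, C_1, one_mul]
    rw [e1, e2, e3] at hrefl
    linear_combination hrefl
  -- to power series
  have hr0ne : R0 ≠ 0 := hR0.ne'
  set r' : ℝ := Real.sqrt R0 with hr'def
  have hr'2 : r' ^ 2 = R0 := Real.sq_sqrt hR0.le
  have hr'ne : r' ≠ 0 := by
    intro h; rw [h] at hr'2; exact hr0ne (by rw [← hr'2]; ring)
  set u : PowerSeries ℝ := PowerSeries.C r' * (P : PowerSeries ℝ) - (Q : PowerSeries ℝ) * F
    with hudef
  set w : PowerSeries ℝ := PowerSeries.C r' * (P : PowerSeries ℝ) + (Q : PowerSeries ℝ) * F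
    with hwdef
  have huw : u * w = PowerSeries.C R0 * PowerSeries.X ^ (2 * μ + 4) := by
    have h1 : u * w = (PowerSeries.C r') ^ 2 * (P : PowerSeries ℝ) ^ 2
        - (Q : PowerSeries ℝ) ^ 2 * F ^ 2 := by rw [hudef, hwdef]; ring
    have h2 := congrArg (fun φ : ℝ[X] => (φ : PowerSeries ℝ)) hP2
    push_cast at h2
    have hcc : PowerSeries.C R0 * PowerSeries.C R0⁻¹ = 1 := by
      rw [← map_mul, mul_inv_cancel₀ hr0ne, map_one]
    rw [h1, hFU, ← map_pow, hr'2, h2]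
    calc PowerSeries.C R0 * (PowerSeries.X ^ (2 * μ + 4)
          + PowerSeries.C R0⁻¹ * (U : PowerSeries ℝ) * (Q : PowerSeries ℝ) ^ 2)
        - (Q : PowerSeries ℝ) ^ 2 * (U : PowerSeries ℝ)
        = (PowerSeries.C R0 * PowerSeries.C R0⁻¹)
            * ((U : PowerSeries ℝ) * (Q : PowerSeries ℝ) ^ 2)
          + PowerSeries.C R0 * PowerSeries.X ^ (2 * μ + 4)
          - (Q : PowerSeries ℝ) ^ 2 * (U : PowerSeries ℝ) := by ring
      _ = PowerSeries.C R0 * PowerSeries.X ^ (2 * μ + 4) := by rw [hcc]; ring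
  -- constant coefficients
  have hcu : (PowerSeries.coeff 0) u = r' * P.coeff 0 - Q.coeff 0 * B 0 := by
    rw [hudef, map_sub, PowerSeries.coeff_C_mul, Polynomial.coeff_coe,
      PowerSeries.coeff_mul, Finset.Nat.antidiagonal_zero, Finset.sum_singleton,
      Polynomial.coeff_coe, hFdef, PowerSeries.coeff_mk]
  have hcw : (PowerSeries.coeff 0) w = r' * P.coeff 0 + Q.coeff 0 * B 0 := by
    rw [hwdef, map_add, PowerSeries.coeff_C_mul, Polynomial.coeff_coe,
      PowerSeries.coeff_mul, Finset.Nat.antidiagonal_zero, Finset.sum_singleton,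
      Polynomial.coeff_coe, hFdef, PowerSeries.coeff_mk]
  have h00 : (PowerSeries.coeff 0) u * (PowerSeries.coeff 0) w = 0 := by
    have := congrArg (PowerSeries.coeff 0) huw
    rw [PowerSeries.coeff_mul, Finset.Nat.antidiagonal_zero, Finset.sum_singleton] at this
    rw [this, PowerSeries.coeff_C_mul, PowerSeries.coeff_X_pow, if_neg (by omega), mul_zero]
  have hsumne : (PowerSeries.coeff 0) u + (PowerSeries.coeff 0) w ≠ 0 := by
    rw [hcu, hcw]
    have : r' * P.coeff 0 - Q.coeff 0 * B 0 + (r' * P.coeff 0 + Q.coeff 0 * B 0)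
        = 2 * (r' * P.coeff 0) := by ring
    rw [this]
    exact mul_ne_zero two_ne_zero (mul_ne_zero hr'ne hP0)
  -- vanishing of middle coefficients of Q * F
  have hQF : ∀ k, μ + 3 ≤ k → k ≤ 2 * μ + 3 →
      (PowerSeries.coeff k) ((Q : PowerSeries ℝ) * F) = 0 := by
    have hPk : ∀ k, μ + 3 ≤ k → P.coeff k = 0 := fun k hk =>
      coeff_eq_zero_of_natDegree_lt (by omega)
    rcases mul_eq_zero.mp h00 with h0 | h0
    · -- u has zero constant coefficient, w is invertible
      have hw0 : PowerSeries.constantCoeff w ≠ 0 := by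
        rw [← PowerSeries.coeff_zero_eq_constantCoeff_apply]
        intro hww
        exact hsumne (by rw [h0, hww, add_zero])
      have hinv : u = PowerSeries.C R0 * PowerSeries.X ^ (2 * μ + 4) * w⁻¹ := by
        rw [← huw, mul_assoc, PowerSeries.mul_inv_cancel w hw0, mul_one]
      have hdvd : (PowerSeries.X : PowerSeries ℝ) ^ (2 * μ + 4) ∣ u :=
        ⟨PowerSeries.C R0 * w⁻¹, by rw [hinv]; ring⟩
      have hcoef := PowerSeries.X_pow_dvd_iff.mp hdvd
      intro k hk1 hk2
      have hk3 := hcoef k (by omega)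
      rw [hudef, map_sub, PowerSeries.coeff_C_mul, Polynomial.coeff_coe, hPk k hk1,
        mul_zero, zero_sub, neg_eq_zero] at hk3
      exact hk3
    · have hu0 : PowerSeries.constantCoeff u ≠ 0 := by
        rw [← PowerSeries.coeff_zero_eq_constantCoeff_apply]
        intro huu
        exact hsumne (by rw [h0, huu, add_zero])
      have hinv : w = PowerSeries.C R0 * PowerSeries.X ^ (2 * μ + 4) * u⁻¹ := by
        rw [← huw, mul_comm u w, mul_assoc, PowerSeries.mul_inv_cancel u hu0, mul_one]
      have hdvd : (PowerSeries.X : PowerSeries ℝ) ^ (2 * μ + 4) ∣ w :=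
        ⟨PowerSeries.C R0 * u⁻¹, by rw [hinv]; ring⟩
      have hcoef := PowerSeries.X_pow_dvd_iff.mp hdvd
      intro k hk1 hk2
      have hk3 := hcoef k (by omega)
      rw [hwdef, map_add, PowerSeries.coeff_C_mul, Polynomial.coeff_coe, hPk k hk1,
        mul_zero, zero_add] at hk3
      exact hk3
  -- kernel vector
  set vv : Fin (μ + 1) → ℝ := fun j => Q.coeff (μ - (j : ℕ)) with hvvdef
  have hvvne : vv ≠ 0 := by
    rw [Function.ne_iff]
    refine ⟨⟨μ, by omega⟩, ?_⟩
    rw [hvvdef]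
    simpa [Nat.sub_self] using hQ0
  have hmul : (Matrix.of fun i j : Fin (μ + 1) => B ((i : ℕ) + (j : ℕ) + 3)).mulVec vv = 0 := by
    funext i
    rw [Matrix.mulVec, dotProduct, Pi.zero_apply]
    have := hQF (μ + 3 + (i : ℕ)) (by omega) (by omega)
    rw [hFdef, coeff_mulF B μ Q hQdeg (i : ℕ)] at this
    rw [← this]
    refine Finset.sum_congr rfl fun j _ => ?_
    rw [Matrix.of_apply, hvvdef]
    ring
  exact (Matrix.exists_mulVec_eq_zero_iff).mp ⟨vv, hvvne, hmul⟩
open FormalMultilinearSeries in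
lemma cauchy {f : ℝ → ℝ} (hf : AnalyticAt ℝ f 0) (B : ℕ → ℝ)
    (hB : ∀ k, B k = iteratedDeriv k f 0 / (Nat.factorial k : ℝ))
    (U : ℝ[X]) (hfsq : ∀ᶠ x in nhds (0 : ℝ), f x ^ 2 = Polynomial.eval x U) :
    (PowerSeries.mk B) ^ 2 = (U : PowerSeries ℝ) := by
  classical
  obtain ⟨p, hp⟩ := hf
  obtain ⟨r, hball⟩ := hp
  have hBp : ∀ k, B k = p.coeff k := by
    intro k
    have h1 := hball.factorial_smul (1 : ℝ) k
    have h2 : iteratedDeriv k f 0 = iteratedFDeriv ℝ k f 0 (fun _ => (1 : ℝ)) := by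
      rw [iteratedDeriv_eq_iteratedFDeriv]
    rw [hB k, h2, ← h1]
    have h3 : p k (fun _ => (1 : ℝ)) = p.coeff k := rfl
    rw [h3, nsmul_eq_mul]
    field_simp
  set c : ℕ → ℝ := fun n => ∑ kl ∈ antidiagonal n, B kl.1 * B kl.2 with hc
  have hcoeff_c : ∀ n, (ofScalars ℝ c).coeff n = c n := by
    intro n
    show ofScalars ℝ c n (fun _ => (1 : ℝ)) = c n
    rw [ofScalars_apply_eq]
    simp
  have hcoeff_U : ∀ n, (ofScalars ℝ U.coeff).coeff n = U.coeff n := by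
    intro n
    show ofScalars ℝ U.coeff n (fun _ => (1 : ℝ)) = U.coeff n
    rw [ofScalars_apply_eq]
    simp
  have H1 : HasFPowerSeriesAt (fun z => f z ^ 2) (ofScalars ℝ c) 0 := by
    rw [hasFPowerSeriesAt_iff]
    filter_upwards [EMetric.ball_mem_nhds (0 : ℝ) hball.r_pos] with z hz
    have hzrad : z ∈ EMetric.ball (0 : ℝ) p.radius :=
      EMetric.ball_subset_ball hball.r_le hz
    have hsum : HasSum (fun n => z ^ n • B n) (f (0 + z)) := by
      have := hball.hasSum hz
      refine this.congr_fun fun n => ?_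
      rw [apply_eq_pow_smul_coeff, hBp n]
    have hA : Summable fun n => ‖z ^ n • B n‖ := by
      have := p.summable_norm_apply hzrad
      refine this.congr fun n => ?_
      rw [apply_eq_pow_smul_coeff, hBp n]
    have hterm : ∀ n, (∑ kl ∈ antidiagonal n,
        (z ^ kl.1 • B kl.1) * (z ^ kl.2 • B kl.2)) = z ^ n • c n := by
      intro n
      rw [hc, Finset.smul_sum]
      refine Finset.sum_congr rfl fun kl hkl => ?_
      rw [Finset.HasAntidiagonal.mem_antidiagonal] at hkl
      simp only [smul_eq_mul]
      rw [← hkl, pow_add]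
      ring
    have hsummable : Summable fun n => z ^ n • c n := by
      have := (summable_norm_sum_mul_antidiagonal_of_summable_norm hA hA).of_norm
      exact this.congr hterm
    simp_rw [hcoeff_c]
    rw [Summable.hasSum_iff hsummable]
    have hprod := tsum_mul_tsum_eq_tsum_sum_antidiagonal_of_summable_norm hA hA
    rw [hsum.tsum_eq] at hprod
    rw [tsum_congr hterm] at hprod
    rw [← hprod]
    ring
  have H2 : HasFPowerSeriesAt (fun z => f z ^ 2) (ofScalars ℝ U.coeff) 0 := by
    rw [hasFPowerSeriesAt_iff]
    filter_upwards [hfsq] with z hz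
    simp_rw [hcoeff_U, zero_add, hz]
    have h0 : ∀ n ∉ Finset.range (U.natDegree + 1), z ^ n • U.coeff n = 0 := by
      intro n hn
      rw [Finset.mem_range, not_lt] at hn
      rw [coeff_eq_zero_of_natDegree_lt (by omega), smul_zero]
    have := hasSum_sum_of_ne_finset_zero (L := SummationFilter.unconditional ℕ) h0
    rwa [show (∑ n ∈ Finset.range (U.natDegree + 1), z ^ n • U.coeff n) = eval z U by
      rw [eval_eq_sum_range]
      exact Finset.sum_congr rfl fun i _ => by rw [smul_eq_mul, mul_comm]] at this
  have hseries : ofScalars ℝ c = ofScalars ℝ U.coeff :=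
    H1.eq_formalMultilinearSeries H2
  have hcU : c = U.coeff := ofScalars_series_injective ℝ ℝ hseries
  ext k
  rw [pow_two, PowerSeries.coeff_mul, Polynomial.coeff_coe, ← hcU, hc]
  exact Finset.sum_congr rfl fun kl _ => by rw [PowerSeries.coeff_mk, PowerSeries.coeff_mk]

end Stmt9

/-- for even `n = 2m`, `m ≥ 2`, the Hankel determinant
`det (B_{i+j+3})_{0 ≤ i,j ≤ m−2}` of the Taylor coefficients of `√((a−x)(b−x)(β−x))` at `0`
vanishes if and only if there exist real polynomials `p`, `q` of degrees `m`, `m−2` with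
`p(s)² − s(s − 1/a)(s − 1/b)(s − 1/β) q(s)² = 1`. -/
theorem stmt_9 (a b β : ℝ) (hab : b < a) (hb : 0 < b) (hβ0 : 0 < β) (hβa : β < a)
    (hβb : β ≠ b)
    (f : ℝ → ℝ) (hf : AnalyticAt ℝ f 0) (hf0 : f 0 = Real.sqrt (a * b * β))
    (hfsq : ∀ᶠ x in nhds (0 : ℝ), (f x) ^ 2 = (a - x) * (b - x) * (β - x))
    (B : ℕ → ℝ) (hB : ∀ k, B k = iteratedDeriv k f 0 / (Nat.factorial k : ℝ))
    (m n : ℕ) (hm : 2 ≤ m) (hn : n = 2 * m) :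
    (Matrix.of fun i j : Fin (m - 1) => B ((i : ℕ) + (j : ℕ) + 3)).det = 0 ↔
      ∃ p q : Polynomial ℝ, p.degree = (m : WithBot ℕ) ∧ q.degree = ((m - 2 : ℕ) : WithBot ℕ) ∧
        p ^ 2 - X * (X - Polynomial.C (1 / a)) * (X - Polynomial.C (1 / b)) *
          (X - Polynomial.C (1 / β)) * q ^ 2 = 1 := by
  obtain ⟨μ, rfl⟩ : ∃ μ, m = μ + 2 := ⟨m - 2, by omega⟩
  have ha : (0 : ℝ) < a := hb.trans hab
  have hR0 : (0 : ℝ) < a * b * β := by positivity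
  set U : ℝ[X] := (C a - X) * (C b - X) * (C β - X) with hUdef
  set DD : ℝ[X] := X * (X - C (1 / a)) * (X - C (1 / b)) * (X - C (1 / β)) with hDdef
  have hU3 : U.natDegree = 3 := by
    rw [hUdef]
    compute_degree!
  have hDdeg : DD.natDegree ≤ 4 := by
    rw [hDdef]
    compute_degree
  have hUD : reflect 4 DD = C (a * b * β)⁻¹ * U := by
    have hreflX : reflect 1 (X : ℝ[X]) = 1 := by
      rw [← pow_one (X : ℝ[X]), reflect_monomial, revAt_le (le_refl 1), Nat.sub_self, pow_zero]
    have hrefl1 : ∀ c : ℝ, reflect 1 (X - C c) = 1 - C c * X := by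
      intro c
      rw [Stmt9.reflect_sub', hreflX, reflect_C, pow_one]
    have hfac : ∀ c : ℝ, c ≠ 0 → (1 - C (1 / c) * X : ℝ[X]) = C (1 / c) * (C c - X) := by
      intro c hc
      rw [mul_sub, ← C_mul, one_div, inv_mul_cancel₀ hc, C_1]
    have hd1 : (X - C (1 / a) : ℝ[X]).natDegree ≤ 1 := (natDegree_X_sub_C _).le
    have hd1' : (X - C (1 / b) : ℝ[X]).natDegree ≤ 1 := (natDegree_X_sub_C _).le
    have hd1'' : (X - C (1 / β) : ℝ[X]).natDegree ≤ 1 := (natDegree_X_sub_C _).le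
    have hd2 : (X * (X - C (1 / a)) : ℝ[X]).natDegree ≤ 2 :=
      le_trans (natDegree_mul_le) (by rw [natDegree_X]; omega)
    have hd3 : (X * (X - C (1 / a)) * (X - C (1 / b)) : ℝ[X]).natDegree ≤ 3 :=
      le_trans (natDegree_mul_le) (by omega)
    rw [hDdef, show (4 : ℕ) = 3 + 1 from rfl, reflect_mul _ _ hd3 hd1'',
      show (3 : ℕ) = 2 + 1 from rfl, reflect_mul _ _ hd2 hd1',
      show (2 : ℕ) = 1 + 1 from rfl, reflect_mul _ _ natDegree_X.le hd1,
      hreflX, hrefl1, hrefl1, hrefl1, one_mul,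
      hfac a ha.ne', hfac b hb.ne', hfac β hβ0.ne', hUdef]
    have hCinv : (C (a * b * β)⁻¹ : ℝ[X]) = C (1 / a) * C (1 / b) * C (1 / β) := by
      rw [← C_mul, ← C_mul]
      congr 1
      field_simp
    rw [hCinv]
    ring
  have hfsqU : ∀ᶠ x in nhds (0 : ℝ), f x ^ 2 = Polynomial.eval x U := by
    filter_upwards [hfsq] with x hx
    rw [hx, hUdef]
    simp [eval_mul, eval_sub]
  have hFU : (PowerSeries.mk B) ^ 2 = (U : PowerSeries ℝ) := Stmt9.cauchy hf B hB U hfsqU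
  have hB0 : B 0 ≠ 0 := by
    rw [hB 0, iteratedDeriv_zero, Nat.factorial_zero, Nat.cast_one, div_one, hf0]
    exact (Real.sqrt_pos.mpr hR0).ne'
  constructor
  · intro hdet
    obtain ⟨p, q, h1, h2, h3⟩ :=
      Stmt9.forward B U DD hFU hU3 hB0 (a * b * β) hR0 hDdeg hUD μ hdet
    exact ⟨p, q, h1, h2, h3⟩
  · rintro ⟨p, q, h1, h2, h3⟩
    exact Stmt9.backward B U DD hFU (a * b * β) hR0 hDdeg hUD μ p q h1 h2 h3
end

section
/- Let a > b > 0 and 0 < β < a with β ≠ b, and let n = 2m+1 be an odd integer with m ≥ 1. Then the m×m Hankel determinant det(B_{i+j+2})_{0 ≤ i,j ≤ m−1} vanishes, where B_k are the Taylor coefficients at 0 of √((a−x)(b−x)(β−x)), if and only if there exist real polynomials p and q with deg p = m and deg q = m−1 satisfying s·p(s)² − (s − 1/a)(s − 1/b)(s − 1/β) q(s)² = 1 in ℝ[s]. (Both conditions characterize the n-periodicity, for odd n, of trajectories of the magic billiard in the ellipse with half-turn about the center: Corollaries 3.5 and 3.6(b).) -/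
open Polynomial Filter Topology Finset

noncomputable def Tc (g : ℝ → ℝ) (n : ℕ) : ℝ := iteratedDeriv n g 0 / n.factorial

lemma Tc_congr {g h : ℝ → ℝ} (hgh : g =ᶠ[𝓝 (0:ℝ)] h) (n : ℕ) : Tc g n = Tc h n := by
  unfold Tc; rw [hgh.iteratedDeriv_eq n]

lemma Tc_zero_eq (g : ℝ → ℝ) : Tc g 0 = g 0 := by simp [Tc]

lemma aux_iter_analytic {g : ℝ → ℝ} {s : Set ℝ} (hg : AnalyticOnNhd ℝ g s) (k : ℕ) :
    AnalyticOnNhd ℝ (iteratedDeriv k g) s := by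
  rw [iteratedDeriv_eq_iterate]; exact hg.iterated_deriv k

lemma aux_iteratedDeriv_add {g h : ℝ → ℝ} {s : Set ℝ} (hs : IsOpen s)
    (hg : AnalyticOnNhd ℝ g s) (hh : AnalyticOnNhd ℝ h s) (n : ℕ) :
    ∀ x ∈ s, iteratedDeriv n (fun y => g y + h y) x
      = iteratedDeriv n g x + iteratedDeriv n h x := by
  induction n with
  | zero => intro x hx; simp
  | succ n ih =>
    intro x hx
    have hev : iteratedDeriv n (fun y => g y + h y) =ᶠ[𝓝 x]
        fun y => iteratedDeriv n g y + iteratedDeriv n h y := by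
      filter_upwards [hs.mem_nhds hx] with y hy using ih y hy
    rw [iteratedDeriv_succ, hev.deriv_eq, deriv_fun_add
        ((aux_iter_analytic hg n x hx).differentiableAt)
        ((aux_iter_analytic hh n x hx).differentiableAt),
      ← iteratedDeriv_succ, ← iteratedDeriv_succ]

lemma aux_iteratedDeriv_cmul {g : ℝ → ℝ} {s : Set ℝ} (hs : IsOpen s)
    (hg : AnalyticOnNhd ℝ g s) (c : ℝ) (n : ℕ) :
    ∀ x ∈ s, iteratedDeriv n (fun y => c * g y) x = c * iteratedDeriv n g x := by
  induction n with
  | zero => intro x hx; simp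
  | succ n ih =>
    intro x hx
    have hev : iteratedDeriv n (fun y => c * g y) =ᶠ[𝓝 x]
        fun y => c * iteratedDeriv n g y := by
      filter_upwards [hs.mem_nhds hx] with y hy using ih y hy
    rw [iteratedDeriv_succ, hev.deriv_eq,
      deriv_const_mul c ((aux_iter_analytic hg n x hx).differentiableAt), ← iteratedDeriv_succ]

lemma aux_iteratedDeriv_xmul {h : ℝ → ℝ} {s : Set ℝ} (hs : IsOpen s)
    (hh : AnalyticOnNhd ℝ h s) (n : ℕ) :
    ∀ x ∈ s, iteratedDeriv (n+1) (fun y => y * h y) x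
      = x * iteratedDeriv (n+1) h x + ((n:ℝ)+1) * iteratedDeriv n h x := by
  induction n with
  | zero =>
    intro x hx
    rw [iteratedDeriv_one, iteratedDeriv_one, iteratedDeriv_zero,
      deriv_fun_mul differentiableAt_fun_id ((hh x hx).differentiableAt)]
    simp [deriv_id'']; ring
  | succ n ih =>
    intro x hx
    have hev : iteratedDeriv (n+1) (fun y => y * h y) =ᶠ[𝓝 x]
        fun y => y * iteratedDeriv (n+1) h y + ((n:ℝ)+1) * iteratedDeriv n h y := by
      filter_upwards [hs.mem_nhds hx] with y hy using ih y hy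
    have d1 : DifferentiableAt ℝ (iteratedDeriv (n+1) h) x :=
      (aux_iter_analytic hh (n+1) x hx).differentiableAt
    have d0 : DifferentiableAt ℝ (iteratedDeriv n h) x :=
      (aux_iter_analytic hh n x hx).differentiableAt
    rw [iteratedDeriv_succ, hev.deriv_eq,
      deriv_fun_add (differentiableAt_fun_id.fun_mul d1) (d0.const_mul _),
      deriv_fun_mul differentiableAt_fun_id d1, deriv_const_mul _ d0,
      ← iteratedDeriv_succ, ← iteratedDeriv_succ]
    simp [deriv_id'']
    ring

lemma aux_iteratedDeriv_poly (R : ℝ[X]) (n : ℕ) :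
    iteratedDeriv n (fun y => R.eval y) = fun y => (Polynomial.derivative^[n] R).eval y := by
  induction n with
  | zero => simp
  | succ n ih =>
    rw [iteratedDeriv_succ, ih]
    funext x
    rw [Function.iterate_succ_apply']
    exact Polynomial.deriv (p := Polynomial.derivative^[n] R)

lemma Tc_poly (R : ℝ[X]) (n : ℕ) : Tc (fun y => R.eval y) n = R.coeff n := by
  unfold Tc
  rw [aux_iteratedDeriv_poly]
  show (Polynomial.derivative^[n] R).eval 0 / (n.factorial : ℝ) = R.coeff n
  rw [← Polynomial.coeff_zero_eq_eval_zero, Polynomial.coeff_iterate_derivative, zero_add,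
    Nat.descFactorial_self, nsmul_eq_mul]
  rw [mul_comm, mul_div_assoc, div_self (by exact_mod_cast n.factorial_ne_zero), mul_one]

lemma analyticAt_polyEval (R : ℝ[X]) (x : ℝ) : AnalyticAt ℝ (fun y => R.eval y) x := by
  induction R using Polynomial.induction_on' with
  | add p q hp hq => simp only [Polynomial.eval_add]; exact hp.add hq
  | monomial n r =>
    simp only [Polynomial.eval_monomial]
    exact analyticAt_const.mul (analyticAt_id.pow n)

lemma analyticAt_exists_open {g : ℝ → ℝ} (hg : AnalyticAt ℝ g 0) :
    ∃ s : Set ℝ, IsOpen s ∧ (0:ℝ) ∈ s ∧ AnalyticOnNhd ℝ g s := by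
  obtain ⟨t, ht, hta⟩ := hg.eventually_analyticAt.exists_mem
  obtain ⟨s, hst, hs_open, hs0⟩ := mem_nhds_iff.mp ht
  exact ⟨s, hs_open, hs0, fun x hx => hta x (hst hx)⟩

lemma Tc_add {g h : ℝ → ℝ} (hg : AnalyticAt ℝ g 0) (hh : AnalyticAt ℝ h 0) (n : ℕ) :
    Tc (fun y => g y + h y) n = Tc g n + Tc h n := by
  obtain ⟨s, hso, hs0, hsg⟩ := analyticAt_exists_open hg
  obtain ⟨t, hto, ht0, hth⟩ := analyticAt_exists_open hh
  have key := aux_iteratedDeriv_add (hso.inter hto) (fun x hx => hsg x hx.1)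
    (fun x hx => hth x hx.2) n 0 ⟨hs0, ht0⟩
  unfold Tc; rw [key]; ring

lemma Tc_cmul {g : ℝ → ℝ} (hg : AnalyticAt ℝ g 0) (c : ℝ) (n : ℕ) :
    Tc (fun y => c * g y) n = c * Tc g n := by
  obtain ⟨s, hso, hs0, hsg⟩ := analyticAt_exists_open hg
  have key := aux_iteratedDeriv_cmul hso hsg c n 0 hs0
  unfold Tc; rw [key]; ring

lemma Tc_neg {g : ℝ → ℝ} (hg : AnalyticAt ℝ g 0) (n : ℕ) :
    Tc (fun y => -(g y)) n = -(Tc g n) := by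
  have h1 : (fun y => -(g y)) = fun y => (-1 : ℝ) * g y := by funext y; ring
  rw [h1, Tc_cmul hg]; ring

lemma Tc_sub {g h : ℝ → ℝ} (hg : AnalyticAt ℝ g 0) (hh : AnalyticAt ℝ h 0) (n : ℕ) :
    Tc (fun y => g y - h y) n = Tc g n - Tc h n := by
  have h1 : (fun y => g y - h y) = fun y => g y + (-1 : ℝ) * h y := by funext y; ring
  rw [h1, Tc_add hg (analyticAt_const.fun_mul hh), Tc_cmul hh]; ring

lemma analyticAt_finsum {ι : Type} (t : Finset ι) (G : ι → ℝ → ℝ)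
    (hG : ∀ i ∈ t, AnalyticAt ℝ (G i) 0) :
    AnalyticAt ℝ (fun y => ∑ i ∈ t, G i y) 0 := by
  classical
  induction t using Finset.induction_on with
  | empty => simpa using (analyticAt_const (v := (0:ℝ)))
  | @insert a u ha ih =>
    have : (fun y => ∑ i ∈ insert a u, G i y) = fun y => G a y + ∑ i ∈ u, G i y := by
      funext y; rw [Finset.sum_insert ha]
    rw [this]
    exact (hG a (Finset.mem_insert_self a u)).add
      (ih fun i hi => hG i (Finset.mem_insert_of_mem hi))

lemma Tc_finsum {ι : Type} (t : Finset ι) (G : ι → ℝ → ℝ)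
    (hG : ∀ i ∈ t, AnalyticAt ℝ (G i) 0) (n : ℕ) :
    Tc (fun y => ∑ i ∈ t, G i y) n = ∑ i ∈ t, Tc (G i) n := by
  classical
  induction t using Finset.induction_on with
  | empty =>
    have := Tc_poly 0 n
    simpa using this
  | @insert a u ha ih =>
    have h1 : (fun y => ∑ i ∈ insert a u, G i y) = fun y => G a y + ∑ i ∈ u, G i y := by
      funext y; rw [Finset.sum_insert ha]
    rw [h1, Tc_add (hG a (Finset.mem_insert_self a u))
      (analyticAt_finsum u G fun i hi => hG i (Finset.mem_insert_of_mem hi)),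
      ih fun i hi => hG i (Finset.mem_insert_of_mem hi), Finset.sum_insert ha]

lemma Tc_xpow_mul {h : ℝ → ℝ} (hh : AnalyticAt ℝ h 0) (N : ℕ) :
    ∀ n, Tc (fun y => y ^ N * h y) n = if n < N then 0 else Tc h (n - N) := by
  induction N generalizing h with
  | zero => intro n; simp
  | succ N ih =>
    intro n
    have hh' : AnalyticAt ℝ (fun y => y ^ N * h y) 0 := (analyticAt_id.pow N).mul hh
    have key : (fun y : ℝ => y ^ (N+1) * h y) = fun y => y * (y ^ N * h y) := by
      funext y; ring
    rw [key]
    obtain ⟨s, hso, hs0, hsa⟩ := analyticAt_exists_open hh'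
    cases n with
    | zero =>
      rw [Tc_zero_eq]; simp
    | succ k =>
      have hx := aux_iteratedDeriv_xmul hso hsa k 0 hs0
      have e1 : Tc (fun y => y * (y ^ N * h y)) (k+1)
          = iteratedDeriv (k+1) (fun y => y * (y ^ N * h y)) 0 / (k+1).factorial := rfl
      rw [e1, hx, zero_mul, zero_add]
      have e2 : ((k:ℝ)+1) * iteratedDeriv k (fun y => y ^ N * h y) 0 / ((k+1).factorial : ℝ)
          = Tc (fun y => y ^ N * h y) k := by
        unfold Tc
        rw [Nat.factorial_succ]
        push_cast
        have hk : ((k:ℝ) + 1) ≠ 0 := by positivity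
        have hkf : ((k.factorial : ℝ)) ≠ 0 := by exact_mod_cast k.factorial_ne_zero
        field_simp
      rw [e2, ih hh k]
      simp only [Nat.succ_lt_succ_iff, Nat.succ_sub_succ]

lemma Tc_polymul {f : ℝ → ℝ} (hf : AnalyticAt ℝ f 0) (R : ℝ[X]) (n : ℕ) :
    Tc (fun y => R.eval y * f y) n = ∑ i ∈ range (n+1), R.coeff i * Tc f (n - i) := by
  set N := max (R.natDegree + 1) (n + 1) with hN
  have h1 : (fun y => R.eval y * f y) = fun y => ∑ i ∈ range N, R.coeff i * (y ^ i * f y) := by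
    funext y
    rw [Polynomial.eval_eq_sum_range' (lt_of_lt_of_le (Nat.lt_succ_self _) (le_max_left _ _)),
      Finset.sum_mul]
    exact Finset.sum_congr rfl fun i _ => by ring
  have hGan : ∀ i ∈ range N, AnalyticAt ℝ (fun y => R.coeff i * (y ^ i * f y)) 0 :=
    fun i _ => analyticAt_const.mul ((analyticAt_id.pow i).mul hf)
  rw [h1, Tc_finsum _ _ hGan n]
  have h2 : ∀ i ∈ range N, Tc (fun y => R.coeff i * (y ^ i * f y)) n
      = R.coeff i * (if n < i then 0 else Tc f (n - i)) := by
    intro i _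
    have han : AnalyticAt ℝ (fun y : ℝ => y ^ i * f y) 0 := (analyticAt_id.pow i).mul hf
    rw [Tc_cmul han, Tc_xpow_mul hf i n]
  rw [Finset.sum_congr rfl h2]
  rw [← Finset.sum_subset (Finset.range_subset_range.mpr (le_max_right (R.natDegree + 1) (n+1)))]
  · exact Finset.sum_congr rfl fun i hi => by
      rw [if_neg (by simpa using Nat.lt_succ_iff.mp (Finset.mem_range.mp hi))]
  · intro i hiN hin
    rw [if_pos (by simpa using Finset.mem_range.not.mp hin), mul_zero]

lemma aux_factor {g : ℝ → ℝ} (hg : AnalyticAt ℝ g 0) (N : ℕ)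
    (hvan : ∀ k < N, Tc g k = 0) :
    ∃ w : ℝ → ℝ, AnalyticAt ℝ w 0 ∧ ∀ᶠ x in 𝓝 (0:ℝ), g x = x ^ N * w x := by
  induction N with
  | zero => exact ⟨g, hg, Eventually.of_forall (fun x => by simp)⟩
  | succ N ih =>
    obtain ⟨w', hw', heq⟩ := ih (fun k hk => hvan k (hk.trans (Nat.lt_succ_self N)))
    have hTc : Tc g N = w' 0 := by
      rw [Tc_congr heq N, Tc_xpow_mul hw' N N]
      simp [Tc_zero_eq]
    have hw0 : w' 0 = 0 := by rw [← hTc]; exact hvan N (Nat.lt_succ_self N)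
    obtain ⟨pw, hpw⟩ := hw'
    refine ⟨dslope w' 0, ⟨pw.fslope, hpw.has_fpower_series_dslope_fslope⟩, ?_⟩
    have hds : ∀ x : ℝ, x * dslope w' 0 x = w' x := by
      intro x
      rcases eq_or_ne x 0 with rfl | hx
      · simp [hw0]
      · rw [dslope_of_ne _ hx, slope_def_field, hw0]
        field_simp
        ring
    filter_upwards [heq] with x hx
    rw [hx, ← hds x]; ring

lemma aux_cancel_pow {φ ψ : ℝ → ℝ} {K : ℕ} (h : ∀ᶠ x in 𝓝 (0:ℝ), x ^ K * φ x = x ^ K * ψ x)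
    (hφ : ContinuousAt φ 0) (hψ : ContinuousAt ψ 0) : φ 0 = ψ 0 := by
  have hp : ∀ᶠ x in 𝓝[≠] (0:ℝ), φ x = ψ x := by
    filter_upwards [h.filter_mono nhdsWithin_le_nhds, self_mem_nhdsWithin] with x hx hx0
    exact mul_left_cancel₀ (pow_ne_zero K hx0) hx
  have hA : Tendsto φ (𝓝[≠] (0:ℝ)) (𝓝 (φ 0)) := hφ.continuousWithinAt.tendsto
  have hB : Tendsto φ (𝓝[≠] (0:ℝ)) (𝓝 (ψ 0)) :=
    (hψ.continuousWithinAt.tendsto).congr' (hp.mono fun x hx => hx.symm)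
  exact tendsto_nhds_unique hA hB

lemma aux_pow_exp_eq {φ : ℝ → ℝ} (hφ : ContinuousAt φ 0) (hφ0 : φ 0 ≠ 0) {K L : ℕ}
    (h : ∀ᶠ x in 𝓝 (0:ℝ), x ^ K * φ x = -(x ^ L)) : K = L := by
  rcases lt_trichotomy K L with hKL | hKL | hKL
  · exfalso
    have h' : ∀ᶠ x in 𝓝 (0:ℝ), x ^ K * φ x = x ^ K * (-(x ^ (L - K))) := by
      filter_upwards [h] with x hx
      rw [hx, mul_neg, ← pow_add]
      congr 2
      omega
    have hcont : ContinuousAt (fun x : ℝ => -(x ^ (L - K))) 0 := by fun_prop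
    have := aux_cancel_pow h' hφ hcont
    rw [this] at hφ0
    simp [zero_pow (show L - K ≠ 0 by omega)] at hφ0
  · exact hKL
  · exfalso
    have h' : ∀ᶠ x in 𝓝 (0:ℝ), x ^ L * (x ^ (K - L) * φ x) = x ^ L * (-1) := by
      filter_upwards [h] with x hx
      rw [← mul_assoc, ← pow_add, show L + (K - L) = K by omega, hx]
      ring
    have hcont : ContinuousAt (fun x : ℝ => x ^ (K - L) * φ x) 0 :=
      (continuousAt_pow _ _).mul hφ
    have := aux_cancel_pow h' hcont continuousAt_const
    simp [zero_pow (show K - L ≠ 0 by omega)] at this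
lemma coeff_sum_C_mul_X_pow (d : ℕ → ℝ) (N k : ℕ) :
    (∑ t ∈ Finset.range N, C (d t) * X ^ t).coeff k = if k < N then d k else 0 := by
  rw [Polynomial.finset_sum_coeff]
  simp only [Polynomial.coeff_C_mul, Polynomial.coeff_X_pow]
  rw [Finset.sum_congr rfl (fun t _ => by rw [mul_ite, mul_one, mul_zero])]
  simp [Finset.sum_ite_eq' (Finset.range N) k d, eq_comm]

lemma aux_reflect_neg (N : ℕ) (g : ℝ[X]) : reflect N (-g) = -(reflect N g) := by
  have h := Polynomial.reflect_C_mul g (-1) N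
  simpa using h

lemma aux_reflect_sub (N : ℕ) (f g : ℝ[X]) : reflect N (f - g) = reflect N f - reflect N g := by
  rw [sub_eq_add_neg, Polynomial.reflect_add, aux_reflect_neg, sub_eq_add_neg]

lemma aux_reflect_reflect (N : ℕ) (f : ℝ[X]) : reflect N (reflect N f) = f := by
  ext i
  rw [Polynomial.coeff_reflect, Polynomial.coeff_reflect, Polynomial.revAt_invol]

lemma aux_revAt_gt {N i : ℕ} (h : N < i) : Polynomial.revAt N i = i := by
  exact Polynomial.revAt_eq_self_of_lt h

lemma aux_natDegree_reflect_le {f : ℝ[X]} {N : ℕ} (h : f.natDegree ≤ N) :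
    (reflect N f).natDegree ≤ N := by
  rw [Polynomial.natDegree_le_iff_coeff_eq_zero]
  intro k hk
  rw [Polynomial.coeff_reflect, aux_revAt_gt hk]
  exact Polynomial.coeff_eq_zero_of_natDegree_lt (lt_of_le_of_lt h hk)

lemma aux_reflect_succ {P : ℝ[X]} {M : ℕ} (h : P.natDegree ≤ M) :
    reflect (M + 1) P = X * reflect M P := by
  ext n
  rw [Polynomial.coeff_reflect]
  cases n with
  | zero =>
    rw [Polynomial.revAt_le (Nat.zero_le _), Nat.sub_zero]
    rw [Polynomial.coeff_eq_zero_of_natDegree_lt (lt_of_le_of_lt h (Nat.lt_succ_self M))]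
    rw [Polynomial.coeff_X_mul_zero]  -- may not exist
  | succ k =>
    rw [Polynomial.coeff_X_mul, Polynomial.coeff_reflect]
    rcases le_or_gt k M with hkM | hkM
    · rw [Polynomial.revAt_le hkM, Polynomial.revAt_le (by omega : k + 1 ≤ M + 1)]
      congr 1; omega
    · rw [aux_revAt_gt hkM, aux_revAt_gt (by omega)]
      rw [Polynomial.coeff_eq_zero_of_natDegree_lt (by omega),
        Polynomial.coeff_eq_zero_of_natDegree_lt (by omega)]
lemma aux_Cp_expand (a b β : ℝ) :
    (C a - X) * (C b - X) * (C β - X)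
      = C (a*b*β) * X^0 + C (-(a*b + a*β + b*β)) * X^1 + C (a+b+β) * X^2 + C (-1:ℝ) * X^3 := by
  simp only [map_mul, map_add, map_neg, map_one]
  ring

lemma aux_Cp_natDegree (a b β : ℝ) :
    ((C a - X) * (C b - X) * (C β - X) : ℝ[X]).natDegree ≤ 3 := by
  have h1 : ((C a - X : ℝ[X])).natDegree ≤ 1 := by
    apply le_trans (Polynomial.natDegree_sub_le _ _)
    simp
  have h2 : ((C b - X : ℝ[X])).natDegree ≤ 1 := by
    apply le_trans (Polynomial.natDegree_sub_le _ _)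
    simp
  have h3 : ((C β - X : ℝ[X])).natDegree ≤ 1 := by
    apply le_trans (Polynomial.natDegree_sub_le _ _)
    simp
  calc ((C a - X) * (C b - X) * (C β - X) : ℝ[X]).natDegree
      ≤ ((C a - X) * (C b - X) : ℝ[X]).natDegree + (C β - X : ℝ[X]).natDegree :=
        Polynomial.natDegree_mul_le
    _ ≤ 3 := by
        have := Polynomial.natDegree_mul_le (p := (C a - X : ℝ[X])) (q := (C b - X : ℝ[X]))
        omega

lemma aux_Cp_coeff3 (a b β : ℝ) :
    ((C a - X) * (C b - X) * (C β - X) : ℝ[X]).coeff 3 = -1 := by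
  rw [aux_Cp_expand]
  simp only [Polynomial.coeff_add, Polynomial.coeff_C_mul, Polynomial.coeff_X_pow,
    Polynomial.coeff_C]
  norm_num

lemma aux_Cp_eval (a b β x : ℝ) :
    ((C a - X) * (C b - X) * (C β - X) : ℝ[X]).eval x = (a - x) * (b - x) * (β - x) := by
  simp

lemma aux_reflect_Cp (a b β : ℝ) :
    reflect 3 ((C a - X) * (C b - X) * (C β - X) : ℝ[X])
      = (C a * X - 1) * (C b * X - 1) * (C β * X - 1) := by
  rw [aux_Cp_expand]
  rw [Polynomial.reflect_add, Polynomial.reflect_add, Polynomial.reflect_add]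
  rw [Polynomial.reflect_C_mul, Polynomial.reflect_C_mul, Polynomial.reflect_C_mul,
    Polynomial.reflect_C_mul]
  rw [Polynomial.reflect_monomial, Polynomial.reflect_monomial, Polynomial.reflect_monomial,
    Polynomial.reflect_monomial]
  rw [Polynomial.revAt_le (by norm_num), Polynomial.revAt_le (by norm_num),
    Polynomial.revAt_le (by norm_num), Polynomial.revAt_le (by norm_num)]
  simp only [map_mul, map_add, map_neg, map_one]
  ring

lemma aux_CX_factor {a : ℝ} (ha : a ≠ 0) : (C a * X - 1 : ℝ[X]) = C a * (X - C (1/a)) := by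
  rw [mul_sub, ← map_mul]
  rw [mul_one_div_cancel ha]
  simp

lemma aux_reflect_Cp' (a b β : ℝ) (ha : a ≠ 0) (hb : b ≠ 0) (hβ : β ≠ 0) :
    reflect 3 ((C a - X) * (C b - X) * (C β - X) : ℝ[X])
      = C (a*b*β) * ((X - C (1/a)) * (X - C (1/b)) * (X - C (1/β))) := by
  rw [aux_reflect_Cp, aux_CX_factor ha, aux_CX_factor hb, aux_CX_factor hβ]
  simp only [map_mul]
  ring

/-- for odd `n = 2m+1`, `m ≥ 1`, the Hankel determinant
`det (B_{i+j+2})_{0 ≤ i,j ≤ m−1}` of the Taylor coefficients of `√((a−x)(b−x)(β−x))` at `0`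
vanishes if and only if there exist real polynomials `p`, `q` of degrees `m`, `m−1` with
`s·p(s)² − (s − 1/a)(s − 1/b)(s − 1/β) q(s)² = 1`. -/
theorem stmt_11 (a b β : ℝ) (hab : b < a) (hb : 0 < b) (hβ0 : 0 < β) (hβa : β < a)
    (hβb : β ≠ b)
    (f : ℝ → ℝ) (hf : AnalyticAt ℝ f 0) (hf0 : f 0 = Real.sqrt (a * b * β))
    (hfsq : ∀ᶠ x in nhds (0 : ℝ), (f x) ^ 2 = (a - x) * (b - x) * (β - x))
    (B : ℕ → ℝ) (hB : ∀ k, B k = iteratedDeriv k f 0 / (Nat.factorial k : ℝ))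
    (m n : ℕ) (hm : 1 ≤ m) (hn : n = 2 * m + 1) :
    (Matrix.of fun i j : Fin m => B ((i : ℕ) + (j : ℕ) + 2)).det = 0 ↔
      ∃ p q : Polynomial ℝ, p.degree = (m : WithBot ℕ) ∧ q.degree = ((m - 1 : ℕ) : WithBot ℕ) ∧
        X * p ^ 2 - (X - Polynomial.C (1 / a)) * (X - Polynomial.C (1 / b)) *
          (X - Polynomial.C (1 / β)) * q ^ 2 = 1 := by
  have ha : 0 < a := lt_trans hb hab
  have habβ : 0 < a * b * β := by positivity
  have hfT : ∀ k, B k = Tc f k := fun k => by rw [hB k]; rfl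
  have hf0pos : 0 < f 0 := by rw [hf0]; exact Real.sqrt_pos.mpr habβ
  set Cp : ℝ[X] := (C a - X) * (C b - X) * (C β - X) with hCp_def
  have hCp3 : Cp.natDegree ≤ 3 := aux_Cp_natDegree a b β
  have hCpc3 : Cp.coeff 3 = -1 := aux_Cp_coeff3 a b β
  have hCq : ∀ᶠ x in 𝓝 (0:ℝ), f x ^ 2 = Cp.eval x := by
    filter_upwards [hfsq] with x hx
    rw [hx, hCp_def, aux_Cp_eval]
  -- shared sum identity
  have hsum_eq : ∀ Q : ℝ[X], Q.natDegree ≤ m - 1 → ∀ i : Fin m,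
      Tc (fun y => Q.eval y * f y) (m + 1 + (i:ℕ))
        = ∑ j ∈ Finset.range m, Q.coeff (m - 1 - j) * B ((i:ℕ) + j + 2) := by
    intro Q hQd i
    rw [Tc_polymul hf Q (m + 1 + (i:ℕ))]
    rw [← Finset.sum_subset (Finset.range_subset_range.mpr (by omega : m ≤ m + 1 + (i:ℕ) + 1))
      (fun t _ htm => by
        rw [Polynomial.coeff_eq_zero_of_natDegree_lt
          (by rw [Finset.mem_range, not_lt] at htm; omega), zero_mul])]
    rw [← Finset.sum_range_reflect (fun j => Q.coeff (m - 1 - j) * B ((i:ℕ) + j + 2)) m]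
    apply Finset.sum_congr rfl
    intro j hj
    rw [Finset.mem_range] at hj
    rw [show m - 1 - (m - 1 - j) = j by omega, show (i:ℕ) + (m - 1 - j) + 2 = m + 1 + (i:ℕ) - j by omega,
      hfT]
  -- the backward "tail"
  have tail : ∀ P₂ Q₂ : ℝ[X], Q₂ ≠ 0 → Q₂.natDegree ≤ m - 1 → P₂.natDegree ≤ m →
      (∀ j : Fin m, Tc (fun y => Q₂.eval y * f y - P₂.eval y) (m + 1 + (j:ℕ)) = 0) →
      (Matrix.of fun i j : Fin m => B ((i:ℕ) + (j:ℕ) + 2)).det = 0 := by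
    intro P₂ Q₂ hQ₂ne hQ₂d hP₂d hvan
    rw [← Matrix.exists_mulVec_eq_zero_iff]
    refine ⟨fun j => Q₂.coeff (m - 1 - (j:ℕ)), ?_, ?_⟩
    · obtain ⟨t, htd, htne⟩ : ∃ t, t ≤ m - 1 ∧ Q₂.coeff t ≠ 0 := by
        by_contra hcon
        push_neg at hcon
        apply hQ₂ne
        apply Polynomial.ext
        intro k
        rcases le_or_gt k (m-1) with hk | hk
        · simpa using hcon k hk
        · simp [Polynomial.coeff_eq_zero_of_natDegree_lt (lt_of_le_of_lt hQ₂d hk)]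
      intro h0
      have h1 := congrFun h0 ⟨m - 1 - t, by omega⟩
      simp only [Pi.zero_apply] at h1
      rw [show m - 1 - (m - 1 - t) = t by omega] at h1
      exact htne h1
    · funext i
      simp only [Matrix.mulVec, dotProduct, Matrix.of_apply, Pi.zero_apply]
      have e1 : ∑ j : Fin m, B ((i:ℕ) + (j:ℕ) + 2) * Q₂.coeff (m - 1 - (j:ℕ))
          = ∑ j ∈ Finset.range m, Q₂.coeff (m - 1 - j) * B ((i:ℕ) + j + 2) := by
        rw [← Fin.sum_univ_eq_sum_range (fun j => Q₂.coeff (m - 1 - j) * B ((i:ℕ) + j + 2)) m]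
        exact Finset.sum_congr rfl fun j _ => by ring
      rw [e1, ← hsum_eq Q₂ hQ₂d i]
      have e2 := Tc_sub ((analyticAt_polyEval Q₂ 0).fun_mul hf) (analyticAt_polyEval P₂ 0) (m + 1 + (i:ℕ))
      have e3 := hvan i
      rw [e2] at e3
      rw [Tc_poly] at e3
      rw [Polynomial.coeff_eq_zero_of_natDegree_lt (by omega : P₂.natDegree < m + 1 + (i:ℕ))] at e3
      linarith
  constructor
  · -- forward
    intro hdet
    obtain ⟨c, hc0, hcv⟩ := Matrix.exists_mulVec_eq_zero_iff.mpr hdet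
    set dcoef : ℕ → ℝ := fun t => if h : t < m then c ⟨m - 1 - t, by omega⟩ else 0 with hd_def
    set Q : ℝ[X] := ∑ t ∈ Finset.range m, C (dcoef t) * X ^ t with hQ_def
    have hQcoeff : ∀ k, Q.coeff k = if k < m then dcoef k else 0 := fun k => by
      rw [hQ_def]; exact coeff_sum_C_mul_X_pow dcoef m k
    have hQd : Q.natDegree ≤ m - 1 := by
      rw [Polynomial.natDegree_le_iff_coeff_eq_zero]
      intro N hN; rw [hQcoeff, if_neg (by omega)]
    have hQc : ∀ j : Fin m, Q.coeff (m - 1 - (j:ℕ)) = c j := by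
      intro j
      have hjm : (j:ℕ) < m := j.isLt
      rw [hQcoeff, if_pos (by omega), hd_def]
      simp only
      rw [dif_pos (by omega)]
      exact congrArg c (Fin.ext (by simp only; omega))
    have hker : ∀ i : Fin m, ∑ j ∈ Finset.range m, Q.coeff (m - 1 - j) * B ((i:ℕ) + j + 2) = 0 := by
      intro i
      have h1 : (Matrix.of fun i j : Fin m => B ((i:ℕ) + (j:ℕ) + 2)).mulVec c i = 0 := by
        rw [hcv]; rfl
      simp only [Matrix.mulVec, dotProduct, Matrix.of_apply] at h1
      rw [← Fin.sum_univ_eq_sum_range (fun j => Q.coeff (m - 1 - j) * B ((i:ℕ) + j + 2)) m]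
      rw [← h1]
      exact Finset.sum_congr rfl fun j _ => by rw [hQc j]; ring
    have hTQf0 : ∀ i : Fin m, Tc (fun y => Q.eval y * f y) (m + 1 + (i:ℕ)) = 0 := fun i => by
      rw [hsum_eq Q hQd i]; exact hker i
    set P : ℝ[X] := ∑ k ∈ Finset.range (m+1), C (Tc (fun y => Q.eval y * f y) k) * X ^ k with hP_def
    have hPcoeff : ∀ k, P.coeff k = if k < m + 1 then Tc (fun y => Q.eval y * f y) k else 0 :=
      fun k => by rw [hP_def]; exact coeff_sum_C_mul_X_pow _ (m+1) k
    have hPd : P.natDegree ≤ m := by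
      rw [Polynomial.natDegree_le_iff_coeff_eq_zero]
      intro N hN; rw [hPcoeff, if_neg (by omega)]
    have hQfan : AnalyticAt ℝ (fun y => Q.eval y * f y) 0 := (analyticAt_polyEval Q 0).mul hf
    have hu_an : AnalyticAt ℝ (fun y => Q.eval y * f y - P.eval y) 0 :=
      hQfan.sub (analyticAt_polyEval P 0)
    have hu_van : ∀ k, k < 2*m + 1 → Tc (fun y => Q.eval y * f y - P.eval y) k = 0 := by
      intro k hk
      rw [Tc_sub hQfan (analyticAt_polyEval P 0), Tc_poly]
      rcases le_or_gt k m with hkm | hkm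
      · rw [hPcoeff, if_pos (by omega)]; ring
      · rw [hPcoeff, if_neg (by omega)]
        rw [show k = m + 1 + (k - (m+1)) by omega]
        rw [hTQf0 ⟨k - (m+1), by omega⟩]
        ring
    obtain ⟨w, hw_an, hw_eq⟩ := aux_factor hu_an (2*m+1) hu_van
    set D : ℝ[X] := P^2 - Cp * Q^2 with hD_def
    have hDd : D.natDegree ≤ 2*m+1 := by
      rw [hD_def]
      apply le_trans (Polynomial.natDegree_sub_le _ _)
      rw [max_le_iff]
      constructor
      · rw [Polynomial.natDegree_pow]; omega
      · apply le_trans Polynomial.natDegree_mul_le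
        have hq2 : (Q^2).natDegree ≤ 2*(m-1) := by rw [Polynomial.natDegree_pow]; omega
        omega
    have hvv_an : AnalyticAt ℝ (fun y => Q.eval y * f y + P.eval y) 0 :=
      hQfan.add (analyticAt_polyEval P 0)
    have hDcoeff_low : ∀ k, k < 2*m+1 → D.coeff k = 0 := by
      intro k hk
      have hDev : (fun y => D.eval y) =ᶠ[𝓝 (0:ℝ)]
          fun y => y^(2*m+1) * (-(w y * (Q.eval y * f y + P.eval y))) := by
        filter_upwards [hCq, hw_eq] with x hx hwx
        rw [hD_def]
        simp only [Polynomial.eval_sub, Polynomial.eval_mul, Polynomial.eval_pow]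
        rw [← hx]
        linear_combination (-(Q.eval x * f x + P.eval x)) * hwx
      calc D.coeff k = Tc (fun y => D.eval y) k := (Tc_poly D k).symm
        _ = Tc (fun y => y^(2*m+1) * (-(w y * (Q.eval y * f y + P.eval y)))) k := Tc_congr hDev k
        _ = 0 := by
          have hneg : AnalyticAt ℝ (fun y => -(w y * (Q.eval y * f y + P.eval y))) 0 :=
            (hw_an.mul hvv_an).neg
          rw [Tc_xpow_mul hneg (2*m+1) k, if_pos hk]
    set qm := Q.coeff (m - 1) with hqm_def
    have hDtop : D.coeff (2*m+1) = qm^2 := by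
      rw [hD_def, Polynomial.coeff_sub]
      rw [Polynomial.coeff_eq_zero_of_natDegree_lt
        (show (P^2).natDegree < 2*m+1 by rw [Polynomial.natDegree_pow]; omega)]
      rw [show 2*m+1 = 3 + (2*m - 2) by omega]
      rw [Polynomial.coeff_mul_add_eq_of_natDegree_le hCp3
        (show (Q^2).natDegree ≤ 2*m-2 by rw [Polynomial.natDegree_pow]; omega)]
      rw [hCpc3]
      rw [sq Q, show 2*m-2 = (m-1) + (m-1) by omega,
        Polynomial.coeff_mul_add_eq_of_natDegree_le hQd hQd]
      rw [hqm_def]; ring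
    have hqm_ne : qm ≠ 0 := by
      intro hqm0
      have hD0 : D = 0 := by
        apply Polynomial.ext
        intro k
        rcases lt_trichotomy k (2*m+1) with hk | hk | hk
        · simp [hDcoeff_low k hk]
        · rw [hk, hDtop, hqm0]; simp
        · simp [Polynomial.coeff_eq_zero_of_natDegree_lt (lt_of_le_of_lt hDd hk)]
      have hPQ : P^2 = Cp * Q^2 := by
        have := sub_eq_zero.mp (hD_def ▸ hD0)
        exact this
      have hQne : Q ≠ 0 := by
        obtain ⟨j, hj⟩ := Function.ne_iff.mp hc0
        intro hQ0
        apply hj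
        rw [← hQc j, hQ0]
        simp
      obtain ⟨x₀, hx₀⟩ :=
        ((Set.Ioi_infinite a).diff (Polynomial.finite_setOf_isRoot hQne)).nonempty
      obtain ⟨hx₀a, hx₀Q⟩ := hx₀
      rw [Set.mem_Ioi] at hx₀a
      have hQx : Q.eval x₀ ≠ 0 := by simpa [Polynomial.IsRoot] using hx₀Q
      have hCneg : Cp.eval x₀ < 0 := by
        rw [hCp_def, aux_Cp_eval]
        have h1 : a - x₀ < 0 := by linarith
        have h2 : b - x₀ < 0 := by linarith
        have h3 : β - x₀ < 0 := by linarith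
        nlinarith [mul_pos (mul_pos (neg_pos.mpr h1) (neg_pos.mpr h2)) (neg_pos.mpr h3)]
      have hQ2 : 0 < (Q.eval x₀)^2 := lt_of_le_of_ne (sq_nonneg _) (Ne.symm (pow_ne_zero 2 hQx))
      have hev := congrArg (Polynomial.eval x₀) hPQ
      simp only [Polynomial.eval_pow, Polynomial.eval_mul] at hev
      nlinarith [sq_nonneg (P.eval x₀)]
    set P' : ℝ[X] := C qm⁻¹ * P with hP'_def
    set Q' : ℝ[X] := C qm⁻¹ * Q with hQ'_def
    have hP'd : P'.natDegree ≤ m := le_trans (Polynomial.natDegree_C_mul_le _ _) hPd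
    have hQ'd : Q'.natDegree ≤ m - 1 := le_trans (Polynomial.natDegree_C_mul_le _ _) hQd
    have hD_eq : D = C (qm^2) * X^(2*m+1) := by
      apply Polynomial.ext
      intro k
      rcases lt_trichotomy k (2*m+1) with hk | hk | hk
      · rw [hDcoeff_low k hk, Polynomial.coeff_C_mul, Polynomial.coeff_X_pow,
          if_neg (by omega), mul_zero]
      · rw [hk, hDtop, Polynomial.coeff_C_mul, Polynomial.coeff_X_pow, if_pos rfl, mul_one]
      · rw [Polynomial.coeff_eq_zero_of_natDegree_lt (lt_of_le_of_lt hDd hk),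
          Polynomial.coeff_C_mul, Polynomial.coeff_X_pow, if_neg (by omega), mul_zero]
    have hPell : P'^2 - Cp * Q'^2 = X^(2*m+1) := by
      have e1 : P'^2 - Cp * Q'^2 = C qm⁻¹^2 * D := by
        rw [hP'_def, hQ'_def, hD_def]; ring
      rw [e1, hD_eq, ← map_pow, ← mul_assoc, ← map_mul]
      rw [show qm⁻¹^2 * qm^2 = 1 by field_simp]
      simp
    have hvv'an : AnalyticAt ℝ (fun y => Q'.eval y * f y + P'.eval y) 0 :=
      ((analyticAt_polyEval Q' 0).mul hf).add (analyticAt_polyEval P' 0)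
    have hw'an : AnalyticAt ℝ (fun y => qm⁻¹ * w y) 0 := analyticAt_const.mul hw_an
    have hu'_eq : ∀ᶠ x in 𝓝 (0:ℝ), Q'.eval x * f x - P'.eval x = x^(2*m+1) * (qm⁻¹ * w x) := by
      filter_upwards [hw_eq] with x hx
      rw [hP'_def, hQ'_def]
      simp only [Polynomial.eval_mul, Polynomial.eval_C]
      linear_combination qm⁻¹ * hx
    have hprod : ∀ᶠ x in 𝓝 (0:ℝ),
        x^(2*m+1) * ((qm⁻¹ * w x) * (Q'.eval x * f x + P'.eval x))
          = x^(2*m+1) * (-1) := by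
      filter_upwards [hCq, hu'_eq] with x hx hux
      have e2 := congrArg (Polynomial.eval x) hPell
      simp only [Polynomial.eval_sub, Polynomial.eval_mul, Polynomial.eval_pow,
        Polynomial.eval_X] at e2
      linear_combination (-(Q'.eval x * f x + P'.eval x)) * hux + (Q'.eval x)^2 * hx - e2
    have hvv'0 : (qm⁻¹ * w 0) * (Q'.eval 0 * f 0 + P'.eval 0) = -1 :=
      aux_cancel_pow hprod ((hw'an.mul hvv'an).continuousAt) continuousAt_const
    have hP'0 : P'.eval 0 = Q'.eval 0 * f 0 := by
      rw [hP'_def, hQ'_def]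
      simp only [Polynomial.eval_mul, Polynomial.eval_C]
      rw [← Polynomial.coeff_zero_eq_eval_zero, hPcoeff, if_pos (by omega), Tc_zero_eq]
      rw [← Polynomial.coeff_zero_eq_eval_zero]
      ring
    have hQ'0 : Q'.eval 0 ≠ 0 := by
      intro h0
      rw [hP'0, h0] at hvv'0
      norm_num at hvv'0
    have hP'c0 : P'.coeff 0 ≠ 0 := by
      rw [Polynomial.coeff_zero_eq_eval_zero, hP'0]
      exact mul_ne_zero hQ'0 hf0pos.ne'
    have hQ'c0 : Q'.coeff 0 ≠ 0 := by rw [Polynomial.coeff_zero_eq_eval_zero]; exact hQ'0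
    -- construct p and q
    refine ⟨reflect m P', C (Real.sqrt (a*b*β)) * reflect (m-1) Q', ?_, ?_, ?_⟩
    · have h1 : (reflect m P').natDegree ≤ m := aux_natDegree_reflect_le hP'd
      have h2 : (reflect m P').coeff m ≠ 0 := by
        rw [Polynomial.coeff_reflect, Polynomial.revAt_le le_rfl, Nat.sub_self]
        exact hP'c0
      have h3 : reflect m P' ≠ 0 := fun h => h2 (by rw [h]; simp)
      rw [Polynomial.degree_eq_natDegree h3,
        le_antisymm h1 (Polynomial.le_natDegree_of_ne_zero h2)]
    · have hs : Real.sqrt (a*b*β) ≠ 0 := (Real.sqrt_pos.mpr habβ).ne'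
      have h1 : (C (Real.sqrt (a*b*β)) * reflect (m-1) Q').natDegree ≤ m - 1 :=
        le_trans (Polynomial.natDegree_C_mul_le _ _) (aux_natDegree_reflect_le hQ'd)
      have h2 : (C (Real.sqrt (a*b*β)) * reflect (m-1) Q').coeff (m-1) ≠ 0 := by
        rw [Polynomial.coeff_C_mul, Polynomial.coeff_reflect, Polynomial.revAt_le le_rfl,
          Nat.sub_self]
        exact mul_ne_zero hs hQ'c0
      have h3 : (C (Real.sqrt (a*b*β)) * reflect (m-1) Q') ≠ 0 := fun h => h2 (by rw [h]; simp)
      rw [Polynomial.degree_eq_natDegree h3,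
        le_antisymm h1 (Polynomial.le_natDegree_of_ne_zero h2)]
    · have hrefl : reflect (2*m+1) (P'^2 - Cp * Q'^2) = (1:ℝ[X]) := by
        rw [hPell, Polynomial.reflect_monomial, Polynomial.revAt_le le_rfl, Nat.sub_self, pow_zero]
      have hlhs : reflect (2*m+1) (P'^2 - Cp * Q'^2)
          = X * (reflect m P')^2
            - (C (a*b*β) * ((X - C (1/a)) * (X - C (1/b)) * (X - C (1/β))))
              * (reflect (m-1) Q')^2 := by
        rw [aux_reflect_sub]
        congr 1
        · rw [sq P', show 2*m+1 = m + (m+1) by omega,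
            Polynomial.reflect_mul P' P' hP'd (le_trans hP'd (by omega)),
            aux_reflect_succ hP'd]
          ring
        · rw [show 2*m+1 = 3 + (2*m-2) by omega,
            Polynomial.reflect_mul Cp (Q'^2) hCp3
              (by rw [Polynomial.natDegree_pow]; omega),
            hCp_def, aux_reflect_Cp' a b β ha.ne' hb.ne' hβ0.ne']
          congr 1
          rw [sq Q', show 2*m-2 = (m-1) + (m-1) by omega,
            Polynomial.reflect_mul Q' Q' hQ'd hQ'd, ← sq]
      rw [hlhs] at hrefl
      have hq2 : (C (Real.sqrt (a*b*β)) * reflect (m-1) Q')^2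
          = C (a*b*β) * (reflect (m-1) Q')^2 := by
        rw [mul_pow, ← map_pow, Real.sq_sqrt habβ.le]
      rw [hq2]
      linear_combination hrefl
  · -- backward
    rintro ⟨p, q, hpdeg, hqdeg, hpell⟩
    have hs : Real.sqrt (a*b*β) ≠ 0 := (Real.sqrt_pos.mpr habβ).ne'
    have hpm : p.natDegree = m := Polynomial.natDegree_eq_of_degree_eq_some hpdeg
    have hqm1 : q.natDegree = m - 1 := Polynomial.natDegree_eq_of_degree_eq_some hqdeg
    have hqc : q.coeff (m-1) ≠ 0 := by
      have := Polynomial.coeff_ne_zero_of_eq_degree hqdeg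
      exact this
    set P : ℝ[X] := reflect m p with hPdef
    set Q : ℝ[X] := C (Real.sqrt (a*b*β))⁻¹ * reflect (m-1) q with hQdef
    have hPd : P.natDegree ≤ m := aux_natDegree_reflect_le (le_of_eq hpm)
    have hQd : Q.natDegree ≤ m - 1 :=
      le_trans (Polynomial.natDegree_C_mul_le _ _) (aux_natDegree_reflect_le (le_of_eq hqm1))
    have hQ0ne : Q.coeff 0 ≠ 0 := by
      rw [hQdef, Polynomial.coeff_C_mul, Polynomial.coeff_reflect,
        Polynomial.revAt_le (Nat.zero_le _), Nat.sub_zero]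
      exact mul_ne_zero (inv_ne_zero hs) hqc
    have hQne : Q ≠ 0 := fun h => hQ0ne (by rw [h]; simp)
    have hPell2 : P^2 - Cp * Q^2 = X^(2*m+1) := by
      have hrefl := congrArg (reflect (2*m+1)) hpell
      rw [aux_reflect_sub] at hrefl
      have eX : reflect 1 (X : ℝ[X]) = 1 := by
        rw [← pow_one (X : ℝ[X]), Polynomial.reflect_monomial,
          Polynomial.revAt_le le_rfl, Nat.sub_self, pow_zero]
      have e1 : reflect (2*m+1) (X * p^2) = P^2 := by
        rw [show 2*m+1 = 1 + 2*m by omega,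
          Polynomial.reflect_mul X (p^2) Polynomial.natDegree_X_le
            (by rw [Polynomial.natDegree_pow]; omega),
          eX, one_mul, sq p, show 2*m = m + m by omega,
          Polynomial.reflect_mul p p (le_of_eq hpm) (le_of_eq hpm), ← sq, hPdef]
      have hCC3 : ((X - C (1/a)) * (X - C (1/b)) * (X - C (1/β)) : ℝ[X]).natDegree ≤ 3 := by
        apply le_trans Polynomial.natDegree_mul_le
        have h1 := Polynomial.natDegree_mul_le (p := (X - C (1/a) : ℝ[X])) (q := (X - C (1/b) : ℝ[X]))
        have h2 : (X - C (1/a) : ℝ[X]).natDegree ≤ 1 := le_of_eq (Polynomial.natDegree_X_sub_C _)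
        have h3 : (X - C (1/b) : ℝ[X]).natDegree ≤ 1 := le_of_eq (Polynomial.natDegree_X_sub_C _)
        have h4 : (X - C (1/β) : ℝ[X]).natDegree ≤ 1 := le_of_eq (Polynomial.natDegree_X_sub_C _)
        omega
      have hCpRR : Cp = C (a*b*β) * reflect 3 ((X - C (1/a)) * (X - C (1/b)) * (X - C (1/β))) := by
        have h5 := congrArg (reflect 3) (hCp_def ▸ aux_reflect_Cp' a b β ha.ne' hb.ne' hβ0.ne')
        rw [aux_reflect_reflect, Polynomial.reflect_C_mul] at h5
        exact h5
      have e2 : reflect (2*m+1) ((X - C (1/a)) * (X - C (1/b)) * (X - C (1/β)) * q^2)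
          = Cp * Q^2 := by
        rw [show 2*m+1 = 3 + (2*m-2) by omega,
          Polynomial.reflect_mul _ (q^2) hCC3 (by rw [Polynomial.natDegree_pow]; omega)]
        rw [hCpRR, hQdef]
        rw [sq q, show 2*m-2 = (m-1) + (m-1) by omega,
          Polynomial.reflect_mul q q (le_of_eq hqm1) (le_of_eq hqm1)]
        rw [mul_pow, ← map_pow, ← sq (reflect (m-1) q)]
        rw [show ((Real.sqrt (a*b*β))⁻¹)^2 = (a*b*β)⁻¹ by
          rw [inv_pow, Real.sq_sqrt habβ.le]]
        rw [show (C (a*b*β)⁻¹ : ℝ[X]) = C ((a*b*β)⁻¹) from rfl]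
        have hC1 : (C (a*b*β) : ℝ[X]) * C ((a*b*β)⁻¹) = 1 := by
          rw [← map_mul, mul_inv_cancel₀ habβ.ne', map_one]
        calc reflect 3 ((X - C (1/a)) * (X - C (1/b)) * (X - C (1/β))) * (reflect (m-1) q)^2
            = (C (a*b*β) * C ((a*b*β)⁻¹))
              * (reflect 3 ((X - C (1/a)) * (X - C (1/b)) * (X - C (1/β))) * (reflect (m-1) q)^2) := by
              rw [hC1, one_mul]
          _ = C (a*b*β) * reflect 3 ((X - C (1/a)) * (X - C (1/b)) * (X - C (1/β)))
              * (C ((a*b*β)⁻¹) * (reflect (m-1) q)^2) := by ring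
      have e3 : reflect (2*m+1) (1:ℝ[X]) = X^(2*m+1) := by
        rw [show (1:ℝ[X]) = X^0 by rw [pow_zero], Polynomial.reflect_monomial,
          Polynomial.revAt_le (Nat.zero_le _), Nat.sub_zero]
      rw [e1, e2, e3] at hrefl
      exact hrefl
    -- analytic part
    have hQfan : AnalyticAt ℝ (fun y => Q.eval y * f y) 0 := (analyticAt_polyEval Q 0).mul hf
    have hu_an : AnalyticAt ℝ (fun y => Q.eval y * f y - P.eval y) 0 :=
      hQfan.sub (analyticAt_polyEval P 0)
    have hvv_an : AnalyticAt ℝ (fun y => Q.eval y * f y + P.eval y) 0 :=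
      hQfan.add (analyticAt_polyEval P 0)
    have hCpQ : Cp * Q^2 - P^2 = -(X^(2*m+1)) := by linear_combination -hPell2
    have hprod : ∀ᶠ x in 𝓝 (0:ℝ),
        (Q.eval x * f x - P.eval x) * (Q.eval x * f x + P.eval x) = -(x^(2*m+1)) := by
      filter_upwards [hCq] with x hx
      have e2 := congrArg (Polynomial.eval x) hCpQ
      simp only [Polynomial.eval_sub, Polynomial.eval_mul, Polynomial.eval_pow,
        Polynomial.eval_neg, Polynomial.eval_X] at e2
      linear_combination (Q.eval x)^2 * hx + e2
    have hQe0 : Q.eval 0 ≠ 0 := by rw [← Polynomial.coeff_zero_eq_eval_zero]; exact hQ0ne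
    have hne_punctured : ∀ g : ℝ → ℝ,
        (∀ᶠ x in 𝓝 (0:ℝ), (Q.eval x * f x - P.eval x) * (Q.eval x * f x + P.eval x) = -(x^(2*m+1)))
        → ¬ (∀ᶠ x in 𝓝 (0:ℝ), g x = 0) ∨ True := fun _ _ => Or.inr trivial
    have hu_ne : ¬ ∀ᶠ x in 𝓝 (0:ℝ), Q.eval x * f x - P.eval x = 0 := by
      intro hu0
      have hbad : ∀ᶠ x in 𝓝[≠] (0:ℝ), False := by
        have hcomb := (hprod.and hu0).filter_mono (nhdsWithin_le_nhds (s := {(0:ℝ)}ᶜ))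
        filter_upwards [hcomb, self_mem_nhdsWithin] with x hx hx0
        obtain ⟨h1, h2⟩ := hx
        rw [h2, zero_mul] at h1
        exact (pow_ne_zero (2*m+1) (by exact hx0)) (by linarith)
      obtain ⟨x, hx⟩ := hbad.exists
      exact hx
    have hvv_ne : ¬ ∀ᶠ x in 𝓝 (0:ℝ), Q.eval x * f x + P.eval x = 0 := by
      intro hv0
      have hbad : ∀ᶠ x in 𝓝[≠] (0:ℝ), False := by
        have hcomb := (hprod.and hv0).filter_mono (nhdsWithin_le_nhds (s := {(0:ℝ)}ᶜ))
        filter_upwards [hcomb, self_mem_nhdsWithin] with x hx hx0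
        obtain ⟨h1, h2⟩ := hx
        rw [h2, mul_zero] at h1
        exact (pow_ne_zero (2*m+1) (by exact hx0)) (by linarith)
      obtain ⟨x, hx⟩ := hbad.exists
      exact hx
    obtain ⟨k, g, hg_an, hg0, hg_eq⟩ := (hu_an.exists_eventuallyEq_pow_smul_nonzero_iff).mpr hu_ne
    obtain ⟨l, h, hh_an, hh0, hh_eq⟩ := (hvv_an.exists_eventuallyEq_pow_smul_nonzero_iff).mpr hvv_ne
    simp only [sub_zero, smul_eq_mul] at hg_eq hh_eq
    have hkl : k + l = 2*m+1 := by
      apply aux_pow_exp_eq ((hg_an.mul hh_an).continuousAt) (mul_ne_zero hg0 hh0)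
      filter_upwards [hprod, hg_eq, hh_eq] with x h1 h2 h3
      calc x^(k+l) * (g x * h x) = (x^k * g x) * (x^l * h x) := by rw [pow_add]; ring
        _ = (Q.eval x * f x - P.eval x) * (Q.eval x * f x + P.eval x) := by rw [← h2, ← h3]
        _ = -(x^(2*m+1)) := h1
    have hsum0 : (Q.eval 0 * f 0 - P.eval 0) + (Q.eval 0 * f 0 + P.eval 0) ≠ 0 := by
      have h2 : Q.eval 0 * f 0 ≠ 0 := mul_ne_zero hQe0 hf0pos.ne'
      intro hcon
      apply h2
      linarith
    have hcase : k = 0 ∨ l = 0 := by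
      by_contra hcon
      push_neg at hcon
      have hu0 : Q.eval 0 * f 0 - P.eval 0 = 0 := by
        have := hg_eq.self_of_nhds
        rw [this, zero_pow hcon.1, zero_mul]
      have hvv0 : Q.eval 0 * f 0 + P.eval 0 = 0 := by
        have := hh_eq.self_of_nhds
        rw [this, zero_pow hcon.2, zero_mul]
      exact hsum0 (by rw [hu0, hvv0, add_zero])
    rcases hcase with hk0 | hl0
    · -- k = 0, l = 2m+1 : use (P₂, Q₂) = (P, -Q), u₂ = -(Qf + P)
      have hl : l = 2*m+1 := by omega
      apply tail P (-Q) (neg_ne_zero.mpr hQne) (le_trans (Polynomial.natDegree_neg _).le hQd) hPd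
      intro j
      have hfun : (fun y => (-Q).eval y * f y - P.eval y)
          = fun y => -(Q.eval y * f y + P.eval y) := by
        funext y; simp only [Polynomial.eval_neg]; ring
      rw [hfun, Tc_neg hvv_an]
      have : Tc (fun y => Q.eval y * f y + P.eval y) (m + 1 + (j:ℕ)) = 0 := by
        rw [Tc_congr (hh_eq.mono fun x hx => by rw [hx, hl]) (m + 1 + (j:ℕ)),
          Tc_xpow_mul hh_an (2*m+1) (m + 1 + (j:ℕ)), if_pos (by omega)]
      rw [this, neg_zero]
    · -- l = 0, k = 2m+1 : use (P, Q)
      have hk : k = 2*m+1 := by omega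
      apply tail P Q hQne hQd hPd
      intro j
      rw [Tc_congr (hg_eq.mono fun x hx => by rw [hx, hk]) (m + 1 + (j:ℕ)),
        Tc_xpow_mul hg_an (2*m+1) (m + 1 + (j:ℕ)), if_pos (by omega)]
end
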